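/- arXiv:math/0110203 — 4 statements merged into one kernel-verified Lean document; each statement's English description precedes it below -/
import Mathlib

section
/- For all sufficiently large n, the number g_n of unlabeled graphs on n vertices satisfies 2^{binom(n,2)}/n! ≤ g_n ≤ (2^{binom(n,2)}/n!)·(1 + 4n^4/2^n); consequently g_n ~ 2^{binom(n,2)}/n! as n → ∞. -/
open scoped Classical Filter Topology

/-- Isomorphism of labeled graphs on `n` vertices, as a setoid. -/
def graphIsoSetoid (n : ℕ) : Setoid (SimpleGraph (Fin n)) where
  r G G' := Nonempty (G ≃g G')
  iseqv := ⟨fun _ => ⟨SimpleGraph.Iso.refl⟩, fun ⟨e⟩ => ⟨e.symm⟩, fun ⟨e⟩ ⟨f⟩ => ⟨e.trans f⟩⟩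

/-- The number of unlabeled graphs on `n` nodes. -/
noncomputable def gcount (n : ℕ) : ℕ := Nat.card (Quotient (graphIsoSetoid n))

namespace UGC

/-! ### The action of permutations on graphs -/

variable {n : ℕ}

instance graphAction (n : ℕ) : MulAction (Equiv.Perm (Fin n)) (SimpleGraph (Fin n)) where
  smul σ G := { Adj := fun x y => G.Adj (σ.symm x) (σ.symm y)
                symm := ⟨fun x y h => G.adj_symm h⟩
                loopless := ⟨fun x h => G.irrefl h⟩ }
  one_smul G := by ext x y; exact Iff.rfl
  mul_smul σ τ G := by ext x y; exact Iff.rfl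

lemma smul_adj (σ : Equiv.Perm (Fin n)) (G : SimpleGraph (Fin n)) (x y : Fin n) :
    (σ • G).Adj x y ↔ G.Adj (σ.symm x) (σ.symm y) := Iff.rfl

lemma setoid_eq (n : ℕ) :
    graphIsoSetoid n = MulAction.orbitRel (Equiv.Perm (Fin n)) (SimpleGraph (Fin n)) := by
  apply Setoid.ext
  intro G G'
  constructor
  · rintro ⟨e⟩
    refine ⟨e.toEquiv.symm, ?_⟩
    ext x y
    rw [smul_adj]
    simp only [Equiv.symm_symm]
    exact e.map_adj_iff
  · rintro ⟨σ, rfl⟩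
    exact ⟨⟨σ.symm, fun {a b} => Iff.rfl⟩⟩

/-! ### Counting all graphs -/

section EdgeCount

variable {V : Type*} [Fintype V] [DecidableEq V]

abbrev EdgeT (V : Type*) := ↥(⊤ : SimpleGraph V).edgeSet

lemma mem_edgeT_iff (x : Sym2 V) : x ∈ (⊤ : SimpleGraph V).edgeSet ↔ ¬ x.IsDiag := by
  rw [SimpleGraph.edgeSet_top]; exact Iff.rfl

lemma card_edgeT : Fintype.card (EdgeT V) = (Fintype.card V).choose 2 := by
  rw [← SimpleGraph.card_edgeFinset_top_eq_card_choose_two (V := V)]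
  rw [SimpleGraph.edgeFinset, Set.toFinset_card]

noncomputable def graphEquivSet : SimpleGraph V ≃ Set (EdgeT V) where
  toFun G := fun e => e.1 ∈ G.edgeSet
  invFun s := SimpleGraph.fromEdgeSet (Subtype.val '' s)
  left_inv G := by
    have h1 : (Subtype.val '' {e : EdgeT V | e.1 ∈ G.edgeSet}) = G.edgeSet := by
      ext x
      simp only [Set.mem_image, Set.mem_setOf_eq]
      constructor
      · rintro ⟨e, he, rfl⟩; exact he
      · intro hx
        refine ⟨⟨x, ?_⟩, hx, rfl⟩
        exact (SimpleGraph.edgeSet_subset_edgeSet.2 le_top) hx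
    show SimpleGraph.fromEdgeSet (Subtype.val '' {e : EdgeT V | e.1 ∈ G.edgeSet}) = G
    rw [h1, SimpleGraph.fromEdgeSet_edgeSet]
  right_inv s := by
    ext e
    show e.1 ∈ (SimpleGraph.fromEdgeSet (Subtype.val '' s)).edgeSet ↔ e ∈ s
    simp only [SimpleGraph.edgeSet_fromEdgeSet, Set.mem_diff, Set.mem_image,
      Set.mem_setOf_eq]
    constructor
    · rintro ⟨⟨e', he', h⟩, _⟩
      rwa [← Subtype.ext h]
    · intro he
      refine ⟨⟨e, he, rfl⟩, ?_⟩
      exact SimpleGraph.not_isDiag_of_mem_edgeSet ⊤ e.2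

lemma card_simpleGraph : Fintype.card (SimpleGraph V) = 2 ^ (Fintype.card V).choose 2 := by
  rw [Fintype.card_congr graphEquivSet, Fintype.card_set, card_edgeT]

end EdgeCount

/-! ### Orbit-counting (Burnside fiber estimate) -/

section OrbitCount

variable {H β : Type*} [Group H] [MulAction H β] [Fintype β]

lemma card_eq_sum_fibers :
    Fintype.card β = ∑ q : Quotient (MulAction.orbitRel H β),
      Fintype.card {b : β // Quotient.mk (MulAction.orbitRel H β) b = q} := by
  rw [← Fintype.card_sigma]
  exact (Fintype.card_congr (Equiv.sigmaFiberEquiv _)).symm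

lemma two_mul_card_orbits_le :
    2 * Fintype.card (Quotient (MulAction.orbitRel H β)) ≤
      Fintype.card β + Fintype.card {b : β // ∀ h : H, h • b = b} := by
  classical
  set Q := Quotient (MulAction.orbitRel H β)
  set fib : Q → ℕ := fun q => Fintype.card {b : β // Quotient.mk (MulAction.orbitRel H β) b = q}
    with hfib
  have hfib1 : ∀ q : Q, 1 ≤ fib q := by
    intro q
    rw [hfib]
    exact Fintype.card_pos_iff.2 ⟨⟨q.out, Quotient.out_eq q⟩⟩
  have hsing : ∀ q : Q, fib q = 1 → ∀ h : H, h • q.out = q.out := by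
    intro q hq h
    have h1 : Quotient.mk (MulAction.orbitRel H β) (h • q.out) = q :=
      (Quotient.sound (MulAction.mem_orbit q.out h)).trans (Quotient.out_eq q)
    have := Fintype.card_le_one_iff.1 hq.le ⟨h • q.out, h1⟩ ⟨q.out, Quotient.out_eq q⟩
    exact Subtype.ext_iff.1 this
  have key : ∀ q : Q, 2 ≤ fib q + (if fib q = 1 then 1 else 0) := by
    intro q
    by_cases h : fib q = 1
    · simp [h]
    · have := hfib1 q
      have : 2 ≤ fib q := by omega
      simp [h]; omega
  calc 2 * Fintype.card Q = ∑ _q : Q, 2 := by simp [mul_comm]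
    _ ≤ ∑ q : Q, (fib q + (if fib q = 1 then 1 else 0)) := Finset.sum_le_sum fun q _ => key q
    _ = (∑ q : Q, fib q) + ∑ q : Q, (if fib q = 1 then 1 else 0) := Finset.sum_add_distrib
    _ ≤ Fintype.card β + Fintype.card {b : β // ∀ h : H, h • b = b} := by
        refine add_le_add (le_of_eq (card_eq_sum_fibers).symm) ?_
        rw [show (∑ q : Q, (if fib q = 1 then 1 else 0)) =
            (Finset.univ.filter fun q : Q => fib q = 1).card from (Finset.card_filter _ _).symm,
          Fintype.card_subtype]
        refine Finset.card_le_card_of_injOn (fun q => q.out) ?_ ?_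
        · intro q hq
          simp only [Finset.mem_coe, Finset.mem_filter, Finset.mem_univ, true_and] at hq ⊢
          exact hsing q hq
        · intro a _ b _ hab
          exact Quotient.out_injective hab

end OrbitCount

/-! ### The action on edges, and the fixed-graph bound -/

lemma map_mem_edgeT (σ : Equiv.Perm (Fin n)) (e : EdgeT (Fin n)) :
    Sym2.map σ e.1 ∈ (⊤ : SimpleGraph (Fin n)).edgeSet := by
  have h := e.2
  rw [mem_edgeT_iff] at h ⊢
  rwa [Sym2.isDiag_map σ.injective]

instance edgeAction (n : ℕ) : MulAction (Equiv.Perm (Fin n)) (EdgeT (Fin n)) where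
  smul σ e := ⟨Sym2.map σ e.1, map_mem_edgeT σ e⟩
  one_smul e := by
    apply Subtype.ext
    show Sym2.map _ e.1 = e.1
    have : ((1 : Equiv.Perm (Fin n)) : Fin n → Fin n) = id := rfl
    rw [this, Sym2.map_id]
    rfl
  mul_smul σ τ e := by
    apply Subtype.ext
    show Sym2.map _ e.1 = Sym2.map _ (Sym2.map _ e.1)
    rw [Sym2.map_map]
    rfl

lemma edge_smul_val (σ : Equiv.Perm (Fin n)) (e : EdgeT (Fin n)) :
    (σ • e).1 = Sym2.map σ e.1 := rfl

lemma smul_mem_edgeSet_smul (σ : Equiv.Perm (Fin n)) (G : SimpleGraph (Fin n))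
    (e : Sym2 (Fin n)) : Sym2.map σ e ∈ (σ • G).edgeSet ↔ e ∈ G.edgeSet := by
  induction e using Sym2.ind with
  | _ a b =>
    rw [Sym2.map_pair_eq]
    simp only [SimpleGraph.mem_edgeSet]
    rw [smul_adj]
    simp

lemma fixed_edge_iff {σ : Equiv.Perm (Fin n)} {G : SimpleGraph (Fin n)} (hG : σ • G = G)
    (e : Sym2 (Fin n)) : Sym2.map σ e ∈ G.edgeSet ↔ e ∈ G.edgeSet := by
  conv_lhs => rw [← hG]
  exact smul_mem_edgeSet_smul σ G e

noncomputable def orbitQ (σ : Equiv.Perm (Fin n)) :=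
  Quotient (MulAction.orbitRel (Subgroup.zpowers σ) (EdgeT (Fin n)))

noncomputable instance (σ : Equiv.Perm (Fin n)) : Fintype (orbitQ σ) := Quotient.fintype _

lemma card_fixedBy_le (σ : Equiv.Perm (Fin n)) :
    Fintype.card (MulAction.fixedBy (SimpleGraph (Fin n)) σ) ≤ 2 ^ Fintype.card (orbitQ σ) := by
  rw [← Fintype.card_set]
  refine Fintype.card_le_of_injective
    (fun G => {q : orbitQ σ | Quotient.liftOn q (fun e => e.1 ∈ G.1.edgeSet) ?_}) ?_
  · rintro e e' ⟨⟨τ, k, rfl⟩, rfl⟩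
    have hG : σ • G.1 = G.1 := G.2
    have hz : (σ ^ k) • G.1 = G.1 := by
      have h1 : σ ∈ MulAction.stabilizer (Equiv.Perm (Fin n)) G.1 := hG
      exact zpow_mem h1 k
    apply propext
    exact fixed_edge_iff hz e'.1
  · intro G G' h
    have hedge : G.1.edgeSet = G'.1.edgeSet := by
      ext x
      by_cases hx : x ∈ (⊤ : SimpleGraph (Fin n)).edgeSet
      · have := congrArg (fun s => (⟦(⟨x, hx⟩ : EdgeT (Fin n))⟧ : orbitQ σ) ∈ s) h
        exact Iff.of_eq this
      · rw [mem_edgeT_iff, not_not] at hx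
        constructor
        · intro hmem; exact absurd (SimpleGraph.not_isDiag_of_mem_edgeSet _ hmem) (not_not.2 hx)
        · intro hmem; exact absurd (SimpleGraph.not_isDiag_of_mem_edgeSet _ hmem) (not_not.2 hx)
    exact Subtype.ext (SimpleGraph.edgeSet_injective hedge)

/-! ### Counting fixed edges of a permutation -/

noncomputable def mmin (e : Sym2 (Fin n)) : Fin n :=
  Sym2.lift ⟨fun a b => min a b, fun a b => min_comm a b⟩ e

noncomputable def mmax (e : Sym2 (Fin n)) : Fin n :=
  Sym2.lift ⟨fun a b => max a b, fun a b => max_comm a b⟩ e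

lemma mmin_mem (e : Sym2 (Fin n)) : mmin e ∈ e := by
  induction e using Sym2.ind with
  | _ a b =>
    have : mmin s(a, b) = min a b := by simp [mmin]
    rw [this]
    rcases le_total a b with h | h
    · rw [min_eq_left h]; exact Sym2.mem_mk_left a b
    · rw [min_eq_right h]; exact Sym2.mem_mk_right a b

lemma mmax_mem (e : Sym2 (Fin n)) : mmax e ∈ e := by
  induction e using Sym2.ind with
  | _ a b =>
    have : mmax s(a, b) = max a b := by simp [mmax]
    rw [this]
    rcases le_total a b with h | h
    · rw [max_eq_right h]; exact Sym2.mem_mk_right a b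
    · rw [max_eq_left h]; exact Sym2.mem_mk_left a b

lemma isDiag_of_mmin_eq_mmax {e : Sym2 (Fin n)} (h : mmin e = mmax e) : e.IsDiag := by
  induction e using Sym2.ind with
  | _ a b =>
    have h1 : mmin s(a, b) = min a b := by simp [mmin]
    have h2 : mmax s(a, b) = max a b := by simp [mmax]
    rw [h1, h2] at h
    have hab : a = b := by
      have ha := min_le_left a b
      have hb := min_le_right a b
      have ha' := le_max_left a b
      have hb' := le_max_right a b
      rw [h] at ha hb
      exact le_antisymm (le_trans ha' hb) (le_trans hb' ha)
    rw [hab]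
    exact Sym2.mk_isDiag_iff.2 rfl

lemma eq_pair_of_fixed_of_moved {σ : Equiv.Perm (Fin n)} {e : Sym2 (Fin n)}
    (h : Sym2.map σ e = e) {x : Fin n} (hx : x ∈ e) (hmx : σ x ≠ x) : e = s(x, σ x) := by
  induction e using Sym2.ind with
  | _ a b =>
    rw [Sym2.map_pair_eq, Sym2.eq_iff] at h
    rw [Sym2.mem_iff] at hx
    rcases hx with rfl | rfl
    · rcases h with ⟨h1, h2⟩ | ⟨h1, h2⟩
      · exact absurd h1 hmx
      · rw [h1]
    · rcases h with ⟨h1, h2⟩ | ⟨h1, h2⟩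
      · exact absurd h2 hmx
      · rw [h2]
        exact Sym2.eq_swap.symm

lemma all_moved_of_fixed {σ : Equiv.Perm (Fin n)} {e : Sym2 (Fin n)}
    (h : Sym2.map σ e = e) {x : Fin n} (hx : x ∈ e) (hmx : σ x ≠ x) :
    ∀ y ∈ e, σ y ≠ y := by
  intro y hy
  have hpair := eq_pair_of_fixed_of_moved h hx hmx
  rw [hpair, Sym2.mem_iff] at hy
  rcases hy with rfl | rfl
  · exact hmx
  · intro hcon
    exact hmx (σ.injective hcon)

section PerSigma

variable (σ : Equiv.Perm (Fin n))

/-- number of moved points -/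
noncomputable def mv : ℕ := Fintype.card {a : Fin n // σ a ≠ a}

lemma aux_fix (e : Sym2 {a : Fin n // σ a = a}) :
    Sym2.map σ (Sym2.map Subtype.val e) = Sym2.map Subtype.val e := by
  induction e using Sym2.ind with
  | _ a b => rw [Sym2.map_pair_eq, Sym2.map_pair_eq, a.2, b.2]

lemma aux_all (e : Sym2 {a : Fin n // σ a = a}) :
    ∀ x ∈ Sym2.map (Subtype.val : {a : Fin n // σ a = a} → Fin n) e, σ x = x := by
  intro x hx
  rw [Sym2.mem_map] at hx
  obtain ⟨b, _, rfl⟩ := hx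
  exact b.2

lemma aux_mem (e : Sym2 {a : Fin n // σ a = a}) (he : e ∈ (⊤ : SimpleGraph _).edgeSet) :
    Sym2.map Subtype.val e ∈ (⊤ : SimpleGraph (Fin n)).edgeSet := by
  rw [mem_edgeT_iff] at he ⊢
  rwa [Sym2.isDiag_map Subtype.val_injective]

noncomputable def F1map (e : EdgeT {a : Fin n // σ a = a}) :
    {e : EdgeT (Fin n) // σ • e = e ∧ ∀ a ∈ e.1, σ a = a} :=
  ⟨⟨Sym2.map Subtype.val e.1, aux_mem σ e.1 e.2⟩, Subtype.ext (aux_fix σ e.1), aux_all σ e.1⟩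

lemma card_F1_le :
    Fintype.card {e : EdgeT (Fin n) // σ • e = e ∧ ∀ a ∈ e.1, σ a = a} ≤
      (Fintype.card {a : Fin n // σ a = a}).choose 2 := by
  rw [← card_edgeT (V := {a : Fin n // σ a = a})]
  refine Fintype.card_le_of_surjective (F1map σ) ?_
  rintro ⟨⟨x, hx⟩, hfix, hall⟩
  obtain ⟨⟨a, b⟩, hab⟩ := Quot.exists_rep x
  have hx' : x = s(a, b) := hab.symm
  subst hx'
  have ha : σ a = a := hall a (Sym2.mem_mk_left a b)
  have hb : σ b = b := hall b (Sym2.mem_mk_right a b)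
  have hnd : ¬ (s(a, b) : Sym2 (Fin n)).IsDiag := (mem_edgeT_iff _).1 hx
  refine ⟨⟨s((⟨a, ha⟩ : {x : Fin n // σ x = x}), (⟨b, hb⟩ : {x : Fin n // σ x = x})), ?_⟩, ?_⟩
  · rw [mem_edgeT_iff, Sym2.mk_isDiag_iff]
    intro hd
    exact hnd (Sym2.mk_isDiag_iff.2 (congrArg Subtype.val hd))
  · apply Subtype.ext
    apply Subtype.ext
    show Sym2.map Subtype.val s((⟨a, ha⟩ : {x : Fin n // σ x = x}), (⟨b, hb⟩ : {x : Fin n // σ x = x})) = s(a, b)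
    rw [Sym2.map_pair_eq]

/-- The two endpoints of a swapped fixed edge, injectively into moved points. -/
lemma card_F2_le :
    2 * Fintype.card {e : EdgeT (Fin n) // σ • e = e ∧ ¬ ∀ a ∈ e.1, σ a = a} ≤
      Fintype.card {a : Fin n // σ a ≠ a} := by
  have key : ∀ e : {e : EdgeT (Fin n) // σ • e = e ∧ ¬ ∀ a ∈ e.1, σ a = a},
      ∀ y ∈ e.1.1, σ y ≠ y := by
    rintro ⟨⟨x, hx⟩, hfix, hnall⟩
    push_neg at hnall
    obtain ⟨z, hz, hmz⟩ := hnall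
    exact all_moved_of_fixed (Subtype.ext_iff.1 hfix) hz hmz
  have hpair : ∀ e : {e : EdgeT (Fin n) // σ • e = e ∧ ¬ ∀ a ∈ e.1, σ a = a},
      ∀ y ∈ e.1.1, e.1.1 = s(y, σ y) := by
    rintro ⟨⟨x, hx⟩, hfix, hnall⟩ y hy
    exact eq_pair_of_fixed_of_moved (Subtype.ext_iff.1 hfix) hy
      (key ⟨⟨x, hx⟩, hfix, hnall⟩ y hy)
  have := Fintype.card_le_of_injective
    (fun p : {e : EdgeT (Fin n) // σ • e = e ∧ ¬ ∀ a ∈ e.1, σ a = a} × Bool =>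
      (⟨if p.2 then mmax p.1.1.1 else mmin p.1.1.1, by
        rcases p with ⟨e, i⟩
        cases i
        · simpa using key e (mmin e.1.1) (mmin_mem e.1.1)
        · simpa using key e (mmax e.1.1) (mmax_mem e.1.1)⟩ :
        {a : Fin n // σ a ≠ a})) ?_
  · calc 2 * Fintype.card {e : EdgeT (Fin n) // σ • e = e ∧ ¬ ∀ a ∈ e.1, σ a = a}
        = Fintype.card ({e : EdgeT (Fin n) // σ • e = e ∧ ¬ ∀ a ∈ e.1, σ a = a} × Bool) := by
          rw [Fintype.card_prod, Fintype.card_bool, mul_comm]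
      _ ≤ _ := this
  · rintro ⟨e, i⟩ ⟨e', i'⟩ heq
    have hval : (if i then mmax e.1.1 else mmin e.1.1) = (if i' then mmax e'.1.1 else mmin e'.1.1) :=
      congrArg Subtype.val heq
    have hymem : (if i then mmax e.1.1 else mmin e.1.1) ∈ e.1.1 := by
      cases i
      · simpa using mmin_mem e.1.1
      · simpa using mmax_mem e.1.1
    have hymem' : (if i then mmax e.1.1 else mmin e.1.1) ∈ e'.1.1 := by
      rw [hval]
      cases i'
      · simpa using mmin_mem e'.1.1
      · simpa using mmax_mem e'.1.1
    have hee' : e = e' :=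
      Subtype.ext (Subtype.ext ((hpair e _ hymem).trans (hpair e' _ hymem').symm))
    subst hee'
    suffices hii : i = i' by rw [hii]
    cases i <;> cases i'
    · rfl
    · exfalso
      simp only [if_true, if_false] at hval
      exact ((mem_edgeT_iff _).1 e.1.2) (isDiag_of_mmin_eq_mmax hval)
    · exfalso
      simp only [if_true, if_false] at hval
      exact ((mem_edgeT_iff _).1 e.1.2) (isDiag_of_mmin_eq_mmax hval.symm)
    · rfl

lemma fp_split :
    Fintype.card {e : EdgeT (Fin n) // σ • e = e} =
      Fintype.card {e : EdgeT (Fin n) // σ • e = e ∧ ∀ a ∈ e.1, σ a = a} +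
      Fintype.card {e : EdgeT (Fin n) // σ • e = e ∧ ¬ ∀ a ∈ e.1, σ a = a} := by
  classical
  rw [Fintype.card_subtype, Fintype.card_subtype, Fintype.card_subtype]
  rw [← Finset.filter_filter, ← Finset.filter_filter]
  exact (Finset.card_filter_add_card_filter_not _).symm

lemma fixed_zpowers_iff (e : EdgeT (Fin n)) :
    (∀ h : Subgroup.zpowers σ, h • e = e) ↔ σ • e = e := by
  constructor
  · intro h
    exact h ⟨σ, Subgroup.mem_zpowers σ⟩
  · rintro h ⟨τ, k, rfl⟩
    show (σ ^ k) • e = e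
    have h1 : σ ∈ MulAction.stabilizer (Equiv.Perm (Fin n)) e := h
    exact zpow_mem h1 k

lemma two_mul_card_orbits_le' {H β : Type*} [Group H] [MulAction H β] [Fintype β] :
    2 * Nat.card (Quotient (MulAction.orbitRel H β)) ≤
      Nat.card β + Nat.card {b : β // ∀ h : H, h • b = b} := by
  rw [Nat.card_eq_fintype_card, Nat.card_eq_fintype_card, Nat.card_eq_fintype_card]
  exact two_mul_card_orbits_le

lemma card_fixedBy_le' :
    Nat.card (MulAction.fixedBy (SimpleGraph (Fin n)) σ) ≤ 2 ^ Nat.card (orbitQ σ) := by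
  rw [Nat.card_eq_fintype_card, Nat.card_eq_fintype_card]
  exact card_fixedBy_le σ

lemma four_mul_card_orbitQ_le :
    4 * Nat.card (orbitQ σ) ≤
      2 * (n.choose 2) + 2 * ((Nat.card {a : Fin n // σ a = a}).choose 2) +
        Nat.card {a : Fin n // σ a ≠ a} := by
  have h1 := two_mul_card_orbits_le' (H := Subgroup.zpowers σ) (β := EdgeT (Fin n))
  have h0 : Nat.card (orbitQ σ) =
      Nat.card (Quotient (MulAction.orbitRel (Subgroup.zpowers σ) (EdgeT (Fin n)))) := rfl
  have h2 : Nat.card {b : EdgeT (Fin n) // ∀ h : Subgroup.zpowers σ, h • b = b} =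
      Nat.card {e : EdgeT (Fin n) // σ • e = e} :=
    Nat.card_congr (Equiv.subtypeEquivRight fun e => fixed_zpowers_iff σ e)
  have h3 : Nat.card {e : EdgeT (Fin n) // σ • e = e} =
      Nat.card {e : EdgeT (Fin n) // σ • e = e ∧ ∀ a ∈ e.1, σ a = a} +
      Nat.card {e : EdgeT (Fin n) // σ • e = e ∧ ¬ ∀ a ∈ e.1, σ a = a} := by
    rw [Nat.card_eq_fintype_card, Nat.card_eq_fintype_card, Nat.card_eq_fintype_card]
    exact fp_split σ
  have h4 : Nat.card {e : EdgeT (Fin n) // σ • e = e ∧ ∀ a ∈ e.1, σ a = a} ≤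
      (Nat.card {a : Fin n // σ a = a}).choose 2 := by
    rw [Nat.card_eq_fintype_card, Nat.card_eq_fintype_card]
    exact card_F1_le σ
  have h5 : 2 * Nat.card {e : EdgeT (Fin n) // σ • e = e ∧ ¬ ∀ a ∈ e.1, σ a = a} ≤
      Nat.card {a : Fin n // σ a ≠ a} := by
    rw [Nat.card_eq_fintype_card, Nat.card_eq_fintype_card]
    exact card_F2_le σ
  have h6 : Nat.card (EdgeT (Fin n)) = n.choose 2 := by
    rw [Nat.card_eq_fintype_card, card_edgeT, Fintype.card_fin]
  omega

lemma card_fixed_moved :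
    Nat.card {a : Fin n // σ a = a} + Nat.card {a : Fin n // σ a ≠ a} = n := by
  classical
  rw [Nat.card_eq_fintype_card, Nat.card_eq_fintype_card,
    Fintype.card_subtype, Fintype.card_subtype]
  have := Finset.card_filter_add_card_filter_not
    (s := (Finset.univ : Finset (Fin n))) (p := fun a => σ a = a)
  simp only [Finset.card_univ, Fintype.card_fin] at this
  convert this using 2

lemma card_moved_le : Nat.card {a : Fin n // σ a ≠ a} ≤ n := by
  rw [Nat.card_eq_fintype_card]
  have := Fintype.card_subtype_le (fun a : Fin n => σ a ≠ a)
  rwa [Fintype.card_fin] at this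

lemma two_le_card_moved {σ : Equiv.Perm (Fin n)} (hσ : σ ≠ 1) :
    2 ≤ Nat.card {a : Fin n // σ a ≠ a} := by
  rw [Nat.card_eq_fintype_card]
  have : ∃ a : Fin n, σ a ≠ a := by
    by_contra h
    push_neg at h
    exact hσ (Equiv.ext h)
  obtain ⟨a, ha⟩ := this
  have hb : σ (σ a) ≠ σ a := fun h => ha (σ.injective h)
  refine Fintype.one_lt_card_iff.2 ⟨⟨σ a, hb⟩, ⟨a, ha⟩, fun h => ?_⟩
  have : σ a = a := congrArg Subtype.val h
  exact ha this

end PerSigma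

/-! ### Burnside -/

lemma two_mul_choose_two : ∀ k : ℕ, 2 * k.choose 2 = k * (k - 1)
  | 0 => rfl
  | (k+1) => by
    rw [Nat.choose_succ_succ, Nat.choose_one_right, Nat.mul_add, two_mul_choose_two k]
    cases k with
    | zero => rfl
    | succ j =>
      simp only [Nat.succ_sub_one]
      ring

lemma two_mul_choose_two_real (k : ℕ) : 2 * ((k.choose 2 : ℕ) : ℝ) = k * ((k : ℝ) - 1) := by
  have h := two_mul_choose_two k
  cases k with
  | zero => simp
  | succ j =>
    rw [Nat.succ_sub_one] at h
    have h2 : ((2 * (j+1).choose 2 : ℕ) : ℝ) = ((j : ℝ) + 1) * j := by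
      rw [h]; push_cast; ring
    push_cast at h2 ⊢
    linarith

lemma gcount_eq (n : ℕ) :
    gcount n = Nat.card (Quotient
      (MulAction.orbitRel (Equiv.Perm (Fin n)) (SimpleGraph (Fin n)))) := by
  unfold gcount
  rw [setoid_eq n]

lemma burnside (n : ℕ) :
    gcount n * n.factorial =
      ∑ σ : Equiv.Perm (Fin n), Nat.card (MulAction.fixedBy (SimpleGraph (Fin n)) σ) := by
  classical
  have h := MulAction.sum_card_fixedBy_eq_card_orbits_mul_card_group
    (G := Equiv.Perm (Fin n)) (X := SimpleGraph (Fin n))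
  rw [gcount_eq n]
  have h1 : (∑ σ : Equiv.Perm (Fin n), Nat.card (MulAction.fixedBy (SimpleGraph (Fin n)) σ)) =
      ∑ σ : Equiv.Perm (Fin n),
        Fintype.card (MulAction.fixedBy (SimpleGraph (Fin n)) σ) :=
    Finset.sum_congr rfl fun σ _ => Nat.card_eq_fintype_card
  rw [h1, h, Nat.card_eq_fintype_card]
  congr 1
  rw [Fintype.card_perm, Fintype.card_fin]

lemma card_fixedBy_one (n : ℕ) :
    Nat.card (MulAction.fixedBy (SimpleGraph (Fin n)) (1 : Equiv.Perm (Fin n))) =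
      2 ^ n.choose 2 := by
  have h : MulAction.fixedBy (SimpleGraph (Fin n)) (1 : Equiv.Perm (Fin n)) = Set.univ := by
    ext G
    simp [MulAction.mem_fixedBy]
  rw [h]
  have : Nat.card (Set.univ : Set (SimpleGraph (Fin n))) = Nat.card (SimpleGraph (Fin n)) :=
    Nat.card_congr (Equiv.Set.univ _)
  rw [this, Nat.card_eq_fintype_card, card_simpleGraph, Fintype.card_fin]

lemma burnside_lower (n : ℕ) : 2 ^ n.choose 2 ≤ gcount n * n.factorial := by
  rw [burnside n, ← card_fixedBy_one n]
  exact Finset.single_le_sum (f := fun σ : Equiv.Perm (Fin n) =>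
    Nat.card (MulAction.fixedBy (SimpleGraph (Fin n)) σ)) (fun _ _ => Nat.zero_le _)
    (Finset.mem_univ 1)

lemma burnside_upper (n : ℕ) :
    gcount n * n.factorial = 2 ^ n.choose 2 +
      ∑ σ ∈ Finset.univ.erase (1 : Equiv.Perm (Fin n)),
        Nat.card (MulAction.fixedBy (SimpleGraph (Fin n)) σ) := by
  rw [burnside n, ← card_fixedBy_one n]
  exact (Finset.add_sum_erase _ _ (Finset.mem_univ 1)).symm

/-! ### The per-permutation real bound -/

lemma per_sigma_bound (hn : 2 ≤ n) {σ : Equiv.Perm (Fin n)} (hσ : σ ≠ 1) :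
    (Nat.card (MulAction.fixedBy (SimpleGraph (Fin n)) σ) : ℝ) ≤
      2 ^ n.choose 2 * (2 : ℝ) ^ (-((Nat.card {a : Fin n // σ a ≠ a} : ℝ) *
        (2 * n - Nat.card {a : Fin n // σ a ≠ a} - 2) / 4)) := by
  set m := Nat.card {a : Fin n // σ a ≠ a} with hm
  set Ω := Nat.card (orbitQ σ) with hΩ
  have hmn : m ≤ n := card_moved_le σ
  have hm2 : 2 ≤ m := two_le_card_moved hσ
  have hfm : Nat.card {a : Fin n // σ a = a} = n - m := by
    have := card_fixed_moved σ
    omega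
  have h4 : 4 * Ω ≤ 2 * (n.choose 2) + 2 * ((n - m).choose 2) + m := by
    have := four_mul_card_orbitQ_le σ
    rw [hfm] at this
    exact this
  -- real exponent bound
  have hΩreal : (Ω : ℝ) ≤ (n.choose 2 : ℕ) - (m : ℝ) * (2 * n - m - 2) / 4 := by
    have hc : ((2 * (n.choose 2) + 2 * ((n - m).choose 2) + m : ℕ) : ℝ) =
        2 * ((n.choose 2 : ℕ) : ℝ) + 2 * (((n - m).choose 2 : ℕ) : ℝ) + m := by push_cast; ring
    have h4r : 4 * (Ω : ℝ) ≤ 2 * ((n.choose 2 : ℕ) : ℝ) + 2 * (((n - m).choose 2 : ℕ) : ℝ) + m := by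
      rw [← hc]
      exact_mod_cast h4
    have e1 : 2 * ((n.choose 2 : ℕ) : ℝ) = n * ((n : ℝ) - 1) := two_mul_choose_two_real n
    have e2 : 2 * (((n - m).choose 2 : ℕ) : ℝ) = ((n - m : ℕ) : ℝ) * (((n - m : ℕ) : ℝ) - 1) :=
      two_mul_choose_two_real (n - m)
    have e3 : ((n - m : ℕ) : ℝ) = (n : ℝ) - m := by
      rw [Nat.cast_sub hmn]
    rw [e1, e2, e3] at h4r
    nlinarith [h4r]
  calc (Nat.card (MulAction.fixedBy (SimpleGraph (Fin n)) σ) : ℝ)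
      ≤ ((2 ^ Ω : ℕ) : ℝ) := by exact_mod_cast card_fixedBy_le' σ
    _ = (2 : ℝ) ^ ((Ω : ℕ) : ℝ) := by
        rw [Real.rpow_natCast]
        push_cast
        rfl
    _ ≤ (2 : ℝ) ^ (((n.choose 2 : ℕ) : ℝ) + (-((m : ℝ) * (2 * n - m - 2) / 4))) := by
        apply Real.rpow_le_rpow_of_exponent_le one_le_two
        linarith [hΩreal]
    _ = 2 ^ n.choose 2 * (2 : ℝ) ^ (-((m : ℝ) * (2 * n - m - 2) / 4)) := by
        rw [Real.rpow_add (by norm_num : (0:ℝ) < 2), Real.rpow_natCast]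

/-! ### Counting permutations by number of moved points -/

lemma nat_card_moved (σ : Equiv.Perm (Fin n)) :
    Nat.card {a : Fin n // σ a ≠ a} = (Finset.univ.filter fun a : Fin n => σ a ≠ a).card := by
  rw [Nat.card_eq_fintype_card, Fintype.card_subtype]

lemma eq_swap_of_two_moved {σ : Equiv.Perm (Fin n)}
    (h2 : Nat.card {a : Fin n // σ a ≠ a} = 2) {a : Fin n} (ha : σ a ≠ a) :
    σ = Equiv.swap a (σ a) := by
  classical
  set M := Finset.univ.filter fun x : Fin n => σ x ≠ x with hM
  have hMcard : M.card = 2 := by rw [← nat_card_moved σ]; exact h2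
  have hb : σ (σ a) ≠ σ a := fun h => ha (σ.injective h)
  have hab : a ≠ σ a := fun h => ha h.symm
  have hsub : ({a, σ a} : Finset (Fin n)) ⊆ M := by
    intro x hx
    rw [Finset.mem_insert, Finset.mem_singleton] at hx
    rcases hx with rfl | rfl
    · simp [hM, ha]
    · simp [hM, hb]
  have hMeq : M = {a, σ a} := by
    apply (Finset.eq_of_subset_of_card_le hsub ?_).symm
    rw [hMcard, Finset.card_insert_of_notMem (by simpa using hab), Finset.card_singleton]
  have hfix : ∀ x : Fin n, x ≠ a → x ≠ σ a → σ x = x := by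
    intro x hxa hxb
    by_contra hx
    have : x ∈ M := by simp [hM, hx]
    rw [hMeq] at this
    simp only [Finset.mem_insert, Finset.mem_singleton] at this
    tauto
  have hσσ : σ (σ a) = a := by
    by_contra hc
    have h1 : σ (σ a) ≠ σ a := hb
    have h2' : σ (σ a) = σ (σ a) := rfl
    have : σ (σ a) ≠ a → σ (σ a) ≠ σ a → False := by
      intro hna hnb
      have := hfix (σ (σ a)) hna hnb
      -- σ (σ (σ a)) = σ (σ a) → injective → σ (σ a) = σ a, contra
      exact hb (σ.injective this)
    exact this hc h1
  apply Equiv.ext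
  intro x
  by_cases hxa : x = a
  · subst hxa; rw [Equiv.swap_apply_left]
  by_cases hxb : x = σ a
  · subst hxb
    rw [Equiv.swap_apply_right]
    exact hσσ
  · rw [Equiv.swap_apply_of_ne_of_ne hxa hxb]
    exact hfix x hxa hxb

lemma card_two_moved (hn : 1 ≤ n) :
    (Finset.univ.filter fun σ : Equiv.Perm (Fin n) =>
      Nat.card {a : Fin n // σ a ≠ a} = 2).card ≤ n ^ 2 := by
  classical
  have hcard : ((Finset.univ : Finset (Fin n × Fin n))).card = n ^ 2 := by
    simp [Finset.card_univ, sq]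
  rw [← hcard]
  apply Finset.card_le_card_of_injOn (fun σ =>
    if h : (Finset.univ.filter fun x : Fin n => σ x ≠ x).Nonempty
    then ((Finset.univ.filter fun x : Fin n => σ x ≠ x).min' h,
      σ ((Finset.univ.filter fun x : Fin n => σ x ≠ x).min' h))
    else (⟨0, hn⟩, ⟨0, hn⟩))
  · intro σ _; exact Finset.mem_univ _
  · intro σ hσ τ hτ heq
    simp only [Finset.mem_coe, Finset.mem_filter, Finset.mem_univ, true_and] at hσ hτ
    have hσne : (Finset.univ.filter fun x : Fin n => σ x ≠ x).Nonempty := by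
      rw [← Finset.card_pos, ← nat_card_moved σ, hσ]; norm_num
    have hτne : (Finset.univ.filter fun x : Fin n => τ x ≠ x).Nonempty := by
      rw [← Finset.card_pos, ← nat_card_moved τ, hτ]; norm_num
    simp only [dif_pos hσne, dif_pos hτne, Prod.mk.injEq] at heq
    obtain ⟨h1, h2⟩ := heq
    set a := (Finset.univ.filter fun x : Fin n => σ x ≠ x).min' hσne with hadef
    have haσ : σ a ≠ a := by
      have := (Finset.univ.filter fun x : Fin n => σ x ≠ x).min'_mem hσne
      simpa using this
    have haτ : τ a ≠ a := by
      have := (Finset.univ.filter fun x : Fin n => τ x ≠ x).min'_mem hτne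
      rw [← h1] at this
      simpa using this
    have e1 : σ = Equiv.swap a (σ a) := eq_swap_of_two_moved hσ haσ
    have e2 : τ = Equiv.swap a (τ a) := eq_swap_of_two_moved hτ haτ
    rw [e1, e2]
    rw [← h1] at h2
    rw [h2]

lemma card_m_moved (hn : 1 ≤ n) (m : ℕ) :
    (Finset.univ.filter fun σ : Equiv.Perm (Fin n) =>
      Nat.card {a : Fin n // σ a ≠ a} = m).card ≤ (n ^ 2) ^ m := by
  classical
  have hcard : ((Finset.univ : Finset (Fin m → Fin n × Fin n))).card = (n ^ 2) ^ m := by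
    simp [Finset.card_univ, sq]
  rw [← hcard]
  apply Finset.card_le_card_of_injOn (fun σ =>
    if h : Fintype.card {a : Fin n // σ a ≠ a} = m
    then (fun i : Fin m =>
      ((((Fintype.equivFinOfCardEq h).symm i : {a : Fin n // σ a ≠ a}) : Fin n),
       σ (((Fintype.equivFinOfCardEq h).symm i : {a : Fin n // σ a ≠ a}) : Fin n)))
    else (fun _ => (⟨0, hn⟩, ⟨0, hn⟩)))
  · intro σ _; exact Finset.mem_univ _
  · intro σ hσ τ hτ heq
    simp only [Finset.mem_coe, Finset.mem_filter, Finset.mem_univ, true_and] at hσ hτ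
    rw [Nat.card_eq_fintype_card] at hσ hτ
    simp only [dif_pos hσ, dif_pos hτ] at heq
    set eσ := (Fintype.equivFinOfCardEq hσ).symm with heσ
    set eτ := (Fintype.equivFinOfCardEq hτ).symm with heτ
    apply Equiv.ext
    intro x
    by_cases hx : σ x ≠ x
    · set i := eσ.symm ⟨x, hx⟩ with hi
      have h1 : ((eσ i : {a : Fin n // σ a ≠ a}) : Fin n) = x := by
        rw [hi, Equiv.apply_symm_apply]
      have h2 := congrFun heq i
      rw [Prod.mk.injEq] at h2
      obtain ⟨h3, h4⟩ := h2
      rw [h1] at h3 h4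
      -- h3 : x = (eτ i).1 ;  h4 : σ x = τ (eτ i).1
      rw [← h3] at h4
      exact h4
    · push_neg at hx
      by_cases hx' : τ x ≠ x
      · set j := eτ.symm ⟨x, hx'⟩ with hj
        have h1 : ((eτ j : {a : Fin n // τ a ≠ a}) : Fin n) = x := by
          rw [hj, Equiv.apply_symm_apply]
        have h2 := congrFun heq j
        rw [Prod.mk.injEq] at h2
        obtain ⟨h3, h4⟩ := h2
        rw [h1] at h3
        have h5 := (eσ j).2
        rw [h3] at h5
        exact absurd hx h5
      · push_neg at hx'
        rw [hx, hx']


/-! ### Analytic tail bound -/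

lemma claimB {n m : ℕ}
    (hA : ((n:ℝ))^2 ≤ (2:ℝ)^((1/4 : ℝ) * n))
    (hB : ((n:ℝ))^3 ≤ (2:ℝ)^((1/16 : ℝ) * n))
    (hC : ((n:ℝ)) ≤ (2:ℝ)^((1/32 : ℝ) * n))
    (hn : 64 ≤ n) (hm3 : 3 ≤ m) (hmn : m ≤ n) :
    (((n:ℝ))^2)^m * (2:ℝ)^(-((m:ℝ) * (2*n - m - 2) / 4)) ≤
      2 * (n:ℝ)^3 * (2:ℝ)^(-(n:ℝ)) := by
  have hn' : (64:ℝ) ≤ (n:ℝ) := by exact_mod_cast hn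
  have hm3' : (3:ℝ) ≤ (m:ℝ) := by exact_mod_cast hm3
  have hmn' : (m:ℝ) ≤ (n:ℝ) := by exact_mod_cast hmn
  have h2pos : (0:ℝ) < 2 := by norm_num
  have hrp : ∀ x : ℝ, (0:ℝ) < (2:ℝ)^x := fun x => Real.rpow_pos_of_pos h2pos x
  have pow_rpow : ∀ (x : ℝ) (k : ℕ), ((2:ℝ)^x)^k = (2:ℝ)^(x * k) := by
    intro x k
    rw [← Real.rpow_natCast ((2:ℝ)^x) k, ← Real.rpow_mul h2pos.le]
  have rpow_mono : ∀ {x y : ℝ}, x ≤ y → (2:ℝ)^x ≤ (2:ℝ)^y := fun h =>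
    Real.rpow_le_rpow_of_exponent_le one_le_two h
  rcases le_or_gt (m:ℝ) ((n:ℝ)/2) with hcase | hcase
  · -- small m : base B = n² · 2^{-(3n-4)/8} ≤ 1, term ≤ B^m ≤ B^3 ≤ n³ 2^{n/16} 2^{-(9n-12)/8}
    have h1 : (2:ℝ)^(-((m:ℝ) * (2*n - m - 2) / 4)) ≤ ((2:ℝ)^(-((3*(n:ℝ)-4)/8)))^m := by
      rw [pow_rpow]
      apply rpow_mono
      nlinarith
    have hBase0 : (0:ℝ) ≤ (n:ℝ)^2 * (2:ℝ)^(-((3*(n:ℝ)-4)/8)) := by positivity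
    have hBase1 : (n:ℝ)^2 * (2:ℝ)^(-((3*(n:ℝ)-4)/8)) ≤ 1 := by
      have e2 : (n:ℝ)^2 ≤ (2:ℝ)^((3*(n:ℝ)-4)/8) := hA.trans (rpow_mono (by linarith))
      have e3 : (2:ℝ)^((3*(n:ℝ)-4)/8) * (2:ℝ)^(-((3*(n:ℝ)-4)/8)) = 1 := by
        rw [← Real.rpow_add h2pos]; norm_num
      calc (n:ℝ)^2 * (2:ℝ)^(-((3*(n:ℝ)-4)/8))
          ≤ (2:ℝ)^((3*(n:ℝ)-4)/8) * (2:ℝ)^(-((3*(n:ℝ)-4)/8)) :=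
            mul_le_mul_of_nonneg_right e2 (hrp _).le
        _ = 1 := e3
    calc (((n:ℝ))^2)^m * (2:ℝ)^(-((m:ℝ) * (2*n - m - 2) / 4))
        ≤ (((n:ℝ))^2)^m * ((2:ℝ)^(-((3*(n:ℝ)-4)/8)))^m := by
          apply mul_le_mul_of_nonneg_left h1 (by positivity)
      _ = ((n:ℝ)^2 * (2:ℝ)^(-((3*(n:ℝ)-4)/8)))^m := (mul_pow _ _ m).symm
      _ ≤ ((n:ℝ)^2 * (2:ℝ)^(-((3*(n:ℝ)-4)/8)))^3 :=
          pow_le_pow_of_le_one hBase0 hBase1 hm3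
      _ = ((n:ℝ)^3 * (n:ℝ)^3) * ((2:ℝ)^(-((3*(n:ℝ)-4)/8)))^3 := by ring
      _ ≤ ((n:ℝ)^3 * (2:ℝ)^((1/16:ℝ)*n)) * ((2:ℝ)^(-((3*(n:ℝ)-4)/8)))^3 := by
          apply mul_le_mul_of_nonneg_right ?_ (by positivity)
          exact mul_le_mul_of_nonneg_left hB (by positivity)
      _ = (n:ℝ)^3 * ((2:ℝ)^((1/16:ℝ)*n) * (2:ℝ)^(-((3*(n:ℝ)-4)/8) * 3)) := by
          rw [pow_rpow]
          ring
      _ ≤ (n:ℝ)^3 * (2:ℝ)^(-(n:ℝ)) := by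
          apply mul_le_mul_of_nonneg_left ?_ (by positivity)
          rw [← Real.rpow_add h2pos]
          apply rpow_mono
          linarith
      _ ≤ 2 * (n:ℝ)^3 * (2:ℝ)^(-(n:ℝ)) := by
          nlinarith [mul_nonneg (pow_nonneg (Nat.cast_nonneg n) 3) (hrp (-(n:ℝ))).le]
  · -- large m
    have hn2 : (1:ℝ) ≤ (n:ℝ)^2 := by nlinarith
    have h1 : (((n:ℝ))^2)^m ≤ (((n:ℝ))^2)^n := pow_le_pow_right₀ hn2 hmn
    have h2 : (((n:ℝ))^2)^n ≤ (2:ℝ)^((n:ℝ)^2/16) := by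
      have e1 : (n:ℝ)^2 ≤ (2:ℝ)^((1/16:ℝ)*n) := by
        calc (n:ℝ)^2 ≤ ((2:ℝ)^((1/32:ℝ)*n))^2 := by
              apply pow_le_pow_left₀ (by positivity) hC
          _ = (2:ℝ)^((1/16:ℝ)*n) := by rw [pow_rpow]; ring_nf
      calc (((n:ℝ))^2)^n ≤ ((2:ℝ)^((1/16:ℝ)*n))^n := by
            apply pow_le_pow_left₀ (by positivity) e1
        _ = (2:ℝ)^((1/16:ℝ)*n*n) := pow_rpow _ n
        _ = (2:ℝ)^((n:ℝ)^2/16) := by ring_nf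
    have h3 : (2:ℝ)^(-((m:ℝ) * (2*n - m - 2) / 4)) ≤ (2:ℝ)^(-((n:ℝ)*((n:ℝ)-2)/8)) := by
      apply rpow_mono
      nlinarith
    calc (((n:ℝ))^2)^m * (2:ℝ)^(-((m:ℝ) * (2*n - m - 2) / 4))
        ≤ (2:ℝ)^((n:ℝ)^2/16) * (2:ℝ)^(-((n:ℝ)*((n:ℝ)-2)/8)) := by
          apply mul_le_mul (h1.trans h2) h3 (hrp _).le (hrp _).le
      _ = (2:ℝ)^((n:ℝ)^2/16 + -((n:ℝ)*((n:ℝ)-2)/8)) := (Real.rpow_add h2pos _ _).symm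
      _ ≤ (2:ℝ)^(-(n:ℝ)) := by
          apply rpow_mono
          nlinarith
      _ ≤ 2 * (n:ℝ)^3 * (2:ℝ)^(-(n:ℝ)) := by
          have hx : (1:ℝ) ≤ 2 * (n:ℝ)^3 := by nlinarith
          have := mul_le_mul_of_nonneg_right hx (hrp (-(n:ℝ))).le
          rw [one_mul] at this
          linarith


/-! ### Master asymptotic lemma -/

lemma eventually_pow_le (k : ℕ) (c : ℝ) (hc : 0 < c) :
    ∀ᶠ N : ℕ in Filter.atTop, ((N:ℝ))^k ≤ (2:ℝ)^(c * N) := by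
  have h1 : (1:ℝ) < (2:ℝ)^c :=
    (Real.one_lt_rpow_iff_of_pos (by norm_num)).2 (Or.inl ⟨one_lt_two, hc⟩)
  have h2 := tendsto_pow_const_div_const_pow_of_one_lt k h1
  have h3 := h2.eventually (gt_mem_nhds one_pos)
  filter_upwards [h3] with N hN
  have hpos : (0:ℝ) < ((2:ℝ)^c)^N := pow_pos (Real.rpow_pos_of_pos (by norm_num) c) N
  rw [div_lt_one hpos] at hN
  calc ((N:ℝ))^k ≤ ((2:ℝ)^c)^N := hN.le
    _ = (2:ℝ)^(c * N) := by
        rw [← Real.rpow_natCast ((2:ℝ)^c) N, ← Real.rpow_mul (by norm_num : (0:ℝ) ≤ 2)]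

/-! ### The eventual sum bound -/

lemma tail_sum_bound :
    ∀ᶠ n : ℕ in Filter.atTop,
      (∑ σ ∈ Finset.univ.erase (1 : Equiv.Perm (Fin n)),
        (Nat.card (MulAction.fixedBy (SimpleGraph (Fin n)) σ) : ℝ)) ≤
      2 ^ n.choose 2 * (4 * (n:ℝ) ^ 4 * ((2:ℝ) ^ n)⁻¹) := by
  filter_upwards [eventually_pow_le 2 (1/4) (by norm_num),
    eventually_pow_le 3 (1/16) (by norm_num),
    eventually_pow_le 1 (1/32) (by norm_num),
    Filter.eventually_ge_atTop 64] with n hA hB hC hn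
  rw [pow_one] at hC
  have hn2 : 2 ≤ n := le_trans (by norm_num) hn
  have hn1 : 1 ≤ n := le_trans (by norm_num) hn
  have hn' : (64:ℝ) ≤ (n:ℝ) := by exact_mod_cast hn
  have h2pos : (0:ℝ) < 2 := by norm_num
  have hrp : ∀ x : ℝ, (0:ℝ) < (2:ℝ)^x := fun x => Real.rpow_pos_of_pos h2pos x
  set C := n.choose 2 with hc
  set g : ℕ → ℝ := fun m =>
    2 ^ C * (2:ℝ) ^ (-((m:ℝ) * (2 * (n:ℝ) - (m:ℝ) - 2) / 4)) with hg
  set s := Finset.univ.erase (1 : Equiv.Perm (Fin n)) with hs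
  set φ : Equiv.Perm (Fin n) → ℕ := fun σ => Nat.card {a : Fin n // σ a ≠ a} with hφ
  have step1 : (∑ σ ∈ s, (Nat.card (MulAction.fixedBy (SimpleGraph (Fin n)) σ) : ℝ)) ≤
      ∑ σ ∈ s, g (φ σ) := by
    apply Finset.sum_le_sum
    intro σ hσ
    have hσ1 : σ ≠ 1 := (Finset.mem_erase.1 hσ).1
    exact per_sigma_bound hn2 hσ1
  have hmaps : ∀ σ ∈ s, φ σ ∈ Finset.Icc 2 n := by
    intro σ hσ
    have hσ1 : σ ≠ 1 := (Finset.mem_erase.1 hσ).1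
    rw [Finset.mem_Icc]
    exact ⟨two_le_card_moved hσ1, card_moved_le σ⟩
  have step2 : (∑ σ ∈ s, g (φ σ)) =
      ∑ m ∈ Finset.Icc 2 n, ∑ σ ∈ s.filter (fun σ => φ σ = m), g (φ σ) :=
    (Finset.sum_fiberwise_of_maps_to hmaps _).symm
  have step3 : ∀ m ∈ Finset.Icc 2 n,
      (∑ σ ∈ s.filter (fun σ => φ σ = m), g (φ σ)) =
        ((s.filter (fun σ => φ σ = m)).card : ℝ) * g m := by
    intro m _
    rw [Finset.sum_congr rfl (fun σ hσ => by
      rw [(Finset.mem_filter.1 hσ).2]), Finset.sum_const, nsmul_eq_mul]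
  have cardbound : ∀ m, (s.filter (fun σ => φ σ = m)).card ≤
      (Finset.univ.filter (fun σ : Equiv.Perm (Fin n) => φ σ = m)).card := by
    intro m
    apply Finset.card_le_card
    apply Finset.filter_subset_filter
    rw [hs]
    exact Finset.erase_subset _ _
  -- split the sum
  have hsplit : Finset.Icc 2 n = insert 2 (Finset.Icc 3 n) := by
    ext x
    simp only [Finset.mem_Icc, Finset.mem_insert]
    omega
  have hg2 : g 2 = 2 ^ C * ((2:ℝ)^(2:ℝ) * (2:ℝ)^(-(n:ℝ))) := by
    rw [hg]
    simp only
    rw [← Real.rpow_add h2pos]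
    congr 1
    push_cast
    ring_nf
  have hgnonneg : ∀ m, 0 ≤ g m := by
    intro m
    rw [hg]
    positivity
  have main2 : ((Finset.univ.filter (fun σ : Equiv.Perm (Fin n) => φ σ = 2)).card : ℝ) * g 2 ≤
      2 ^ C * (2 * (n:ℝ)^4 * (2:ℝ)^(-(n:ℝ))) := by
    have h1 : ((Finset.univ.filter (fun σ : Equiv.Perm (Fin n) => φ σ = 2)).card : ℝ) ≤
        (n:ℝ)^2 := by
      have := card_two_moved (n := n) hn1
      exact_mod_cast this
    calc ((Finset.univ.filter (fun σ : Equiv.Perm (Fin n) => φ σ = 2)).card : ℝ) * g 2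
        ≤ (n:ℝ)^2 * g 2 := mul_le_mul_of_nonneg_right h1 (hgnonneg 2)
      _ = 2 ^ C * ((n:ℝ)^2 * 4 * (2:ℝ)^(-(n:ℝ))) := by
          rw [hg2]
          have : (2:ℝ)^(2:ℝ) = 4 := by
            rw [show (2:ℝ) = ((2:ℕ):ℝ) by norm_num, Real.rpow_natCast]
            norm_num
          rw [this]
          ring
      _ ≤ 2 ^ C * (2 * (n:ℝ)^4 * (2:ℝ)^(-(n:ℝ))) := by
          apply mul_le_mul_of_nonneg_left ?_ (by positivity)
          have h2 : (n:ℝ)^2 * 4 ≤ 2 * (n:ℝ)^4 := by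
            have hq : (2:ℝ) ≤ (n:ℝ)^2 := by nlinarith
            have h3 := mul_le_mul_of_nonneg_right hq (by positivity : (0:ℝ) ≤ 2*(n:ℝ)^2)
            nlinarith [h3]
          exact mul_le_mul_of_nonneg_right h2 (hrp _).le
  have maintail : (∑ m ∈ Finset.Icc 3 n,
      ((Finset.univ.filter (fun σ : Equiv.Perm (Fin n) => φ σ = m)).card : ℝ) * g m) ≤
      2 ^ C * (2 * (n:ℝ)^4 * (2:ℝ)^(-(n:ℝ))) := by
    have perm : ∀ m ∈ Finset.Icc 3 n,
        ((Finset.univ.filter (fun σ : Equiv.Perm (Fin n) => φ σ = m)).card : ℝ) * g m ≤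
          2 ^ C * (2 * (n:ℝ)^3 * (2:ℝ)^(-(n:ℝ))) := by
      intro m hm
      rw [Finset.mem_Icc] at hm
      have h1 : ((Finset.univ.filter (fun σ : Equiv.Perm (Fin n) => φ σ = m)).card : ℝ) ≤
          (((n:ℝ))^2)^m := by
        have := card_m_moved (n := n) hn1 m
        have h2 : (((n^2)^m : ℕ) : ℝ) = (((n:ℝ))^2)^m := by push_cast; rfl
        rw [← h2]
        exact_mod_cast this
      calc ((Finset.univ.filter (fun σ : Equiv.Perm (Fin n) => φ σ = m)).card : ℝ) * g m
          ≤ (((n:ℝ))^2)^m * g m := mul_le_mul_of_nonneg_right h1 (hgnonneg m)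
        _ = 2 ^ C * ((((n:ℝ))^2)^m * (2:ℝ)^(-((m:ℝ) * (2 * (n:ℝ) - (m:ℝ) - 2) / 4))) := by
            rw [hg]; ring
        _ ≤ 2 ^ C * (2 * (n:ℝ)^3 * (2:ℝ)^(-(n:ℝ))) := by
            apply mul_le_mul_of_nonneg_left ?_ (by positivity)
            exact claimB hA hB hC hn hm.1 hm.2
    calc (∑ m ∈ Finset.Icc 3 n,
        ((Finset.univ.filter (fun σ : Equiv.Perm (Fin n) => φ σ = m)).card : ℝ) * g m)
        ≤ ∑ _m ∈ Finset.Icc 3 n, 2 ^ C * (2 * (n:ℝ)^3 * (2:ℝ)^(-(n:ℝ))) :=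
          Finset.sum_le_sum perm
      _ = ((Finset.Icc 3 n).card : ℝ) * (2 ^ C * (2 * (n:ℝ)^3 * (2:ℝ)^(-(n:ℝ)))) := by
          rw [Finset.sum_const, nsmul_eq_mul]
      _ ≤ (n:ℝ) * (2 ^ C * (2 * (n:ℝ)^3 * (2:ℝ)^(-(n:ℝ)))) := by
          apply mul_le_mul_of_nonneg_right ?_ (by positivity)
          rw [Nat.card_Icc]
          exact_mod_cast Nat.le_of_lt_succ (Nat.lt_succ_of_le (by omega))
      _ = 2 ^ C * (2 * (n:ℝ)^4 * (2:ℝ)^(-(n:ℝ))) := by ring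
  -- combine
  have hfinal : (∑ σ ∈ s, (Nat.card (MulAction.fixedBy (SimpleGraph (Fin n)) σ) : ℝ)) ≤
      2 ^ C * (4 * (n:ℝ)^4 * (2:ℝ)^(-(n:ℝ))) := by
    calc (∑ σ ∈ s, (Nat.card (MulAction.fixedBy (SimpleGraph (Fin n)) σ) : ℝ))
        ≤ ∑ σ ∈ s, g (φ σ) := step1
      _ = ∑ m ∈ Finset.Icc 2 n, ∑ σ ∈ s.filter (fun σ => φ σ = m), g (φ σ) := step2
      _ = ∑ m ∈ Finset.Icc 2 n, ((s.filter (fun σ => φ σ = m)).card : ℝ) * g m :=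
          Finset.sum_congr rfl step3
      _ ≤ ∑ m ∈ Finset.Icc 2 n,
            ((Finset.univ.filter (fun σ : Equiv.Perm (Fin n) => φ σ = m)).card : ℝ) * g m := by
          apply Finset.sum_le_sum
          intro m _
          apply mul_le_mul_of_nonneg_right ?_ (hgnonneg m)
          exact_mod_cast cardbound m
      _ = ((Finset.univ.filter (fun σ : Equiv.Perm (Fin n) => φ σ = 2)).card : ℝ) * g 2 +
          ∑ m ∈ Finset.Icc 3 n,
            ((Finset.univ.filter (fun σ : Equiv.Perm (Fin n) => φ σ = m)).card : ℝ) * g m := by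
          rw [hsplit, Finset.sum_insert (by simp)]
      _ ≤ 2 ^ C * (2 * (n:ℝ)^4 * (2:ℝ)^(-(n:ℝ))) + 2 ^ C * (2 * (n:ℝ)^4 * (2:ℝ)^(-(n:ℝ))) :=
          add_le_add main2 maintail
      _ = 2 ^ C * (4 * (n:ℝ)^4 * (2:ℝ)^(-(n:ℝ))) := by ring
  have hconv : (2:ℝ)^(-(n:ℝ)) = ((2:ℝ)^n)⁻¹ := by
    rw [Real.rpow_neg h2pos.le, Real.rpow_natCast]
  rw [← hconv]
  exact hfinal

lemma real_lower (n : ℕ) : ((2:ℝ) ^ n.choose 2) ≤ (gcount n : ℝ) * n.factorial := by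
  exact_mod_cast UGC.burnside_lower n

lemma real_upper : ∀ᶠ n : ℕ in Filter.atTop,
    (gcount n : ℝ) * n.factorial ≤ 2 ^ n.choose 2 * (1 + 4 * (n:ℝ)^4 / 2^n) := by
  filter_upwards [tail_sum_bound] with n htail
  have hb := burnside_upper n
  have hbr := congrArg (fun k : ℕ => (k : ℝ)) hb
  push_cast at hbr
  rw [hbr]
  have he : (2:ℝ) ^ n.choose 2 * (1 + 4 * (n:ℝ)^4 / 2^n) =
      2 ^ n.choose 2 + 2 ^ n.choose 2 * (4 * (n:ℝ)^4 * ((2:ℝ)^n)⁻¹) := by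
    field_simp
  rw [he]
  linarith [htail]

end UGC

/-- For all sufficiently large `n`, the number `g_n` of unlabeled graphs on `n` vertices
satisfies `2^{binom(n,2)}/n! ≤ g_n ≤ (2^{binom(n,2)}/n!)(1 + 4n⁴/2ⁿ)`; consequently
`g_n ~ 2^{binom(n,2)}/n!` as `n → ∞`. -/
theorem unlabeled_graph_count_asymptotics :
    (∃ N : ℕ, ∀ n ≥ N,
      (2 : ℚ) ^ n.choose 2 / (Nat.factorial n : ℚ) ≤ (gcount n : ℚ) ∧
      (gcount n : ℚ) ≤ (2 : ℚ) ^ n.choose 2 / (Nat.factorial n : ℚ)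
          * (1 + 4 * (n : ℚ) ^ 4 / 2 ^ n)) ∧
    Filter.Tendsto
      (fun n : ℕ => (gcount n : ℝ) / ((2 : ℝ) ^ n.choose 2 / (Nat.factorial n : ℝ)))
      Filter.atTop (𝓝 1) := by
  have hfact : ∀ n : ℕ, (0:ℝ) < (n.factorial : ℝ) := fun n => by
    exact_mod_cast n.factorial_pos
  have hDpos : ∀ n : ℕ, (0:ℝ) < 2 ^ n.choose 2 / (n.factorial : ℝ) := fun n => by positivity
  have hrlow : ∀ n : ℕ, (2:ℝ) ^ n.choose 2 / (n.factorial : ℝ) ≤ (gcount n : ℝ) := by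
    intro n
    rw [div_le_iff₀ (hfact n)]
    exact UGC.real_lower n
  have hrup : ∀ᶠ n : ℕ in Filter.atTop,
      (gcount n : ℝ) ≤ (2:ℝ) ^ n.choose 2 / (n.factorial : ℝ) * (1 + 4 * (n:ℝ)^4 / 2^n) := by
    filter_upwards [UGC.real_upper] with n hupn
    rw [div_mul_eq_mul_div, le_div_iff₀ (hfact n)]
    exact hupn
  constructor
  · -- rational bounds
    have hcomb : ∀ᶠ n : ℕ in Filter.atTop,
        ((2 : ℚ) ^ n.choose 2 / (Nat.factorial n : ℚ) ≤ (gcount n : ℚ) ∧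
        (gcount n : ℚ) ≤ (2 : ℚ) ^ n.choose 2 / (Nat.factorial n : ℚ)
            * (1 + 4 * (n : ℚ) ^ 4 / 2 ^ n)) := by
      filter_upwards [hrup] with n hupn
      have hfQ : (0:ℚ) < (n.factorial : ℚ) := by exact_mod_cast n.factorial_pos
      constructor
      · rw [div_le_iff₀ hfQ]
        exact_mod_cast UGC.burnside_lower n
      · rw [← Rat.cast_le (K := ℝ)]
        push_cast
        exact_mod_cast hupn
    obtain ⟨N, hN⟩ := Filter.eventually_atTop.1 hcomb
    exact ⟨N, hN⟩
  · -- the limit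
    have htend : Filter.Tendsto (fun n : ℕ => 1 + 4 * (n:ℝ)^4 / 2^n)
        Filter.atTop (𝓝 1) := by
      have h0 := tendsto_pow_const_div_const_pow_of_one_lt 4 (by norm_num : (1:ℝ) < 2)
      have h1 := h0.const_mul (4:ℝ)
      have h2 : Filter.Tendsto (fun n : ℕ => 4 * ((n:ℝ)^4 / 2^n)) Filter.atTop (𝓝 0) := by
        simpa using h1
      have h3 := Filter.Tendsto.add (tendsto_const_nhds (x := (1:ℝ)) (f := Filter.atTop)) h2
      simp only [add_zero] at h3
      convert h3 using 2 with n
      ring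
    apply tendsto_of_tendsto_of_tendsto_of_le_of_le'
      (tendsto_const_nhds (x := (1:ℝ))) htend
    · filter_upwards with n
      rw [le_div_iff₀ (hDpos n), one_mul]
      exact hrlow n
    · filter_upwards [hrup] with n hupn
      rw [div_le_iff₀ (hDpos n)]
      calc (gcount n : ℝ) ≤ (2:ℝ) ^ n.choose 2 / (n.factorial : ℝ) * (1 + 4 * (n:ℝ)^4 / 2^n) :=
            hupn
        _ = (1 + 4 * (n:ℝ)^4 / 2^n) * ((2:ℝ) ^ n.choose 2 / (n.factorial : ℝ)) := by ring
end

section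
/- Let G be a graph on n vertices chosen uniformly at random (each edge present independently with probability 1/2). For 2 ≤ m ≤ n, the probability that G has an automorphism moving exactly m vertices is at most 2^{-m(n/2 - 3m/8 - 2·log₂ n)}. -/
open scoped Classical

open Finset Equiv

namespace ProbAutAux

lemma min'_congr {α : Type*} [LinearOrder α] {s t : Finset α} (h : s = t)
    (hs : s.Nonempty) (ht : t.Nonempty) : s.min' hs = t.min' ht := by subst h; rfl

lemma adj_zpow {n : ℕ} (π : Equiv.Perm (Fin n)) (G : SimpleGraph (Fin n))
    (h : ∀ u v, G.Adj (π u) (π v) ↔ G.Adj u v) :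
    ∀ (j : ℤ) (u v : Fin n), G.Adj ((π ^ j) u) ((π ^ j) v) ↔ G.Adj u v := by
  have hinv : ∀ u v, G.Adj (π⁻¹ u) (π⁻¹ v) ↔ G.Adj u v := by
    intro u v
    conv_rhs => rw [← Equiv.apply_symm_apply π u, ← Equiv.apply_symm_apply π v]
    exact (h _ _).symm
  intro j
  induction j using Int.induction_on with
  | zero => simp
  | succ k ih =>
      intro u v
      have e1 : (π ^ ((k : ℤ) + 1)) u = (π ^ (k : ℤ)) (π u) := by
        rw [zpow_add_one]; rfl
      have e2 : (π ^ ((k : ℤ) + 1)) v = (π ^ (k : ℤ)) (π v) := by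
        rw [zpow_add_one]; rfl
      rw [e1, e2, ih (π u) (π v), h]
  | pred k ih =>
      intro u v
      have e1 : (π ^ (-(k : ℤ) - 1)) u = (π ^ (-(k : ℤ))) (π⁻¹ u) := by
        rw [zpow_sub_one]; rfl
      have e2 : (π ^ (-(k : ℤ) - 1)) v = (π ^ (-(k : ℤ))) (π⁻¹ v) := by
        rw [zpow_sub_one]; rfl
      rw [e1, e2, ih (π⁻¹ u) (π⁻¹ v), hinv]

lemma two_pow_pred_le_factorial : ∀ m : ℕ, 2 ^ (m - 1) ≤ m.factorial
  | 0 => by simp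
  | 1 => by simp
  | (m + 2) => by
      have ih := two_pow_pred_le_factorial (m + 1)
      simp only [Nat.add_sub_cancel] at ih ⊢
      calc 2 ^ (m + 1) = 2 * 2 ^ m := by ring
        _ ≤ (m + 2) * (m + 1).factorial := Nat.mul_le_mul (by omega) (by simpa using ih)
        _ = (m + 2).factorial := (Nat.factorial_succ (m + 1)).symm

lemma orderIsoOfFin_congr {α : Type*} [LinearOrder α] {s t : Finset α} {m : ℕ}
    (h : s = t) (hs : s.card = m) (ht : t.card = m) (i : Fin m) :
    (s.orderIsoOfFin hs i : α) = (t.orderIsoOfFin ht i : α) := by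
  subst h; rfl

lemma card_perm_le {n : ℕ} (m : ℕ) :
    ((univ : Finset (Equiv.Perm (Fin n))).filter
        (fun π => π.support.card = m)).card ≤ n.choose m * n ^ m := by
  have hsub : ((univ : Finset (Equiv.Perm (Fin n))).filter
      (fun π => π.support.card = m)).card
      = Fintype.card {π : Equiv.Perm (Fin n) // π.support.card = m} :=
    (Fintype.card_subtype _).symm
  rw [hsub]
  have htarget : Fintype.card ({T : Finset (Fin n) // T.card = m} × (Fin m → Fin n))
      = n.choose m * n ^ m := by
    rw [Fintype.card_prod, Fintype.card_subtype, Fintype.card_fun]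
    congr 1
    · have : (univ : Finset (Finset (Fin n))).filter (fun T => T.card = m)
          = Finset.powersetCard m (univ : Finset (Fin n)) := by
        rw [Finset.powersetCard_eq_filter, Finset.powerset_univ]
      rw [this, Finset.card_powersetCard, card_univ, Fintype.card_fin]
    · simp
  rw [← htarget]
  apply Fintype.card_le_of_injective
    (fun π => (⟨π.1.support, π.2⟩,
      fun i => π.1 ((π.1.support.orderIsoOfFin π.2 i : Fin n))))
  intro π π' hee
  have h1 : π.1.support = π'.1.support := congrArg (·.1) (congrArg Prod.fst hee)
  have h2 := congrArg Prod.snd hee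
  apply Subtype.ext
  apply Equiv.ext
  intro x
  by_cases hx : x ∈ π.1.support
  · obtain ⟨i, hi⟩ := (π.1.support.orderIsoOfFin π.2).surjective ⟨x, hx⟩
    have hx1 : ((π.1.support.orderIsoOfFin π.2 i : Fin n)) = x := by rw [hi]
    have hfun := congrFun h2 i
    simp only at hfun
    -- π'.1.support.orderIsoOfFin π'.2 i equals π.1.support.orderIsoOfFin π.2 i
    have hiso : ((π'.1.support.orderIsoOfFin π'.2 i : Fin n))
        = ((π.1.support.orderIsoOfFin π.2 i : Fin n)) :=
      orderIsoOfFin_congr h1.symm _ _ i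
    rw [hx1] at hfun
    rw [hiso, hx1] at hfun
    exact hfun
  · have hx' : x ∉ π'.1.support := h1 ▸ hx
    rw [Equiv.Perm.notMem_support.mp hx, Equiv.Perm.notMem_support.mp hx']

lemma card_fixed_le {n : ℕ} (m : ℕ) (hm2 : 2 ≤ m) (hmn : m ≤ n)
    (π : Equiv.Perm (Fin n)) (hπ : π.support.card = m) :
    ((univ : Finset (SimpleGraph (Fin n))).filter
        (fun G => ∀ u v, G.Adj (π u) (π v) ↔ G.Adj u v)).card
      ≤ 2 ^ (n.choose 2 - ((m - m / 2) * (n - m) + (m - m / 2).choose 2)) ∧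
    (m - m / 2) * (n - m) + (m - m / 2).choose 2 ≤ n.choose 2 := by
  set S := π.support with hSdef
  set rep : Fin n → Fin n :=
    fun x => ((π.cycleOf x).support ∪ {x}).min' ⟨x, by simp⟩ with hrepdef
  have hrep_eq : ∀ x, x ∈ S →
      (π.cycleOf x).support ∪ {x} = (π.cycleOf x).support := by
    intro x hx
    apply Finset.union_eq_left.mpr
    rw [Finset.singleton_subset_iff, Equiv.Perm.mem_support_cycleOf_iff]
    exact ⟨Equiv.Perm.SameCycle.refl _ _, hx⟩
  have hrep_mem : ∀ x, x ∈ S → rep x ∈ (π.cycleOf x).support := by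
    intro x hx
    have h1 : rep x ∈ (π.cycleOf x).support ∪ {x} := by
      simp only [hrepdef]
      exact Finset.min'_mem _ _
    rwa [hrep_eq x hx] at h1
  have hrepS : ∀ x, x ∈ S → rep x ∈ S :=
    fun x hx => Equiv.Perm.support_cycleOf_le π x (hrep_mem x hx)
  have hsame : ∀ x, x ∈ S → π.SameCycle x (rep x) := by
    intro x hx
    have := hrep_mem x hx
    rw [Equiv.Perm.mem_support_cycleOf_iff] at this
    exact this.1
  have hrep_apply : ∀ x, x ∈ S → rep (π x) = rep x := by
    intro x hx
    have hπx : π x ∈ S := Equiv.Perm.apply_mem_support.mpr hx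
    have hcyc : (π.cycleOf (π x)).support ∪ {π x} = (π.cycleOf x).support ∪ {x} := by
      rw [hrep_eq x hx, hrep_eq (π x) hπx, Equiv.Perm.cycleOf_self_apply]
    simp only [hrepdef]
    exact min'_congr hcyc _ _
  set R₀ := S.image rep with hR₀def
  have hR₀S : R₀ ⊆ S := by
    intro y hy
    obtain ⟨x, hx, rfl⟩ := Finset.mem_image.mp hy
    exact hrepS x hx
  have hk : 2 * R₀.card ≤ m := by
    rw [← hπ]
    apply Finset.mul_card_image_le_card S 2
    intro b hb
    obtain ⟨x₀, hx₀, rfl⟩ := Finset.mem_image.mp hb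
    have hne' : x₀ ≠ π x₀ := (Equiv.Perm.mem_support.mp hx₀).symm
    have hsub : ({x₀, π x₀} : Finset (Fin n)) ⊆ S.filter (fun x => rep x = rep x₀) := by
      intro y hy
      rcases Finset.mem_insert.mp hy with rfl | hy
      · exact Finset.mem_filter.mpr ⟨hx₀, rfl⟩
      · rw [Finset.mem_singleton] at hy; subst hy
        exact Finset.mem_filter.mpr
          ⟨Equiv.Perm.apply_mem_support.mpr hx₀, hrep_apply x₀ hx₀⟩
    calc 2 = ({x₀, π x₀} : Finset (Fin n)).card := (Finset.card_pair hne').symm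
      _ ≤ _ := Finset.card_le_card hsub
  set M := S \ R₀ with hMdef
  have hMcard : m - m / 2 ≤ M.card := by
    have h1 : M.card = S.card - R₀.card := by
      rw [hMdef]; exact Finset.card_sdiff_of_subset hR₀S
    rw [hπ] at h1
    omega
  have hMS : M ⊆ S := Finset.sdiff_subset
  -- the sets of pairs
  set D : Finset (Sym2 (Fin n)) := univ.filter
    (fun e => ¬ e.IsDiag ∧ (∃ x ∈ e, x ∈ M) ∧ ∀ x ∈ e, x ∉ R₀) with hDdef
  set N : Finset (Sym2 (Fin n)) := univ.filter (fun e => ¬ e.IsDiag) with hNdef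
  have hDN : D ⊆ N := by
    intro e he
    rw [hDdef, Finset.mem_filter] at he
    rw [hNdef, Finset.mem_filter]
    exact ⟨he.1, he.2.1⟩
  have hNcard : N.card = n.choose 2 := by
    have := Sym2.card_subtype_not_diag (α := Fin n)
    rw [Fintype.card_subtype] at this
    simpa using this
  set R : Finset (Sym2 (Fin n)) := N \ D with hRdef
  -- escape lemma
  have escape : ∀ u v : Fin n, u ≠ v → ∃ j : ℤ, s((π ^ j) u, (π ^ j) v) ∈ R := by
    intro u v huv
    by_cases hD : s(u, v) ∈ D
    · rw [hDdef, Finset.mem_filter] at hD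
      obtain ⟨-, -, ⟨x, hxe, hxM⟩, -⟩ := hD
      have hxS : x ∈ S := hMS hxM
      obtain ⟨j, hj⟩ := hsame x hxS
      refine ⟨j, ?_⟩
      rw [hRdef, Finset.mem_sdiff]
      constructor
      · rw [hNdef, Finset.mem_filter]
        refine ⟨Finset.mem_univ _, ?_⟩
        rw [Sym2.isDiag_iff_proj_eq]
        intro hcon
        exact huv ((π ^ j).injective hcon)
      · intro hmem
        rw [hDdef, Finset.mem_filter] at hmem
        apply hmem.2.2.2 ((π ^ j) x)
        · rw [Sym2.mem_iff] at hxe ⊢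
          rcases hxe with rfl | rfl
          · exact Or.inl rfl
          · exact Or.inr rfl
        · rw [hj, hR₀def]
          exact Finset.mem_image_of_mem rep hxS
    · refine ⟨0, ?_⟩
      simp only [zpow_zero, Equiv.Perm.one_apply, hRdef, Finset.mem_sdiff]
      constructor
      · rw [hNdef, Finset.mem_filter]
        exact ⟨Finset.mem_univ _, by rw [Sym2.isDiag_iff_proj_eq]; exact huv⟩
      · simpa using hD
    -- injection into functions on R
  have hinj : ((univ : Finset (SimpleGraph (Fin n))).filter
      (fun G => ∀ u v, G.Adj (π u) (π v) ↔ G.Adj u v)).card ≤ 2 ^ R.card := by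
    have hcardfun : Fintype.card (↥R → Prop) = 2 ^ R.card := by
      rw [Fintype.card_fun, Fintype.card_prop, Fintype.card_coe]
    rw [← Fintype.card_subtype, ← hcardfun]
    apply Fintype.card_le_of_injective
      (fun (G : {G : SimpleGraph (Fin n) // ∀ u v, G.Adj (π u) (π v) ↔ G.Adj u v})
        (e : ↥R) => ((e : Sym2 (Fin n)) ∈ G.1.edgeSet : Prop))
    intro G G' hGG'
    apply Subtype.ext
    ext u v
    by_cases huv : u = v
    · subst huv
      exact iff_of_false (G.1.loopless.irrefl u) (G'.1.loopless.irrefl u)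
    · obtain ⟨j, hj⟩ := escape u v huv
      have h1 := adj_zpow π G.1 G.2 j u v
      have h2 := adj_zpow π G'.1 G'.2 j u v
      have h3 := congrFun hGG' ⟨s((π ^ j) u, (π ^ j) v), hj⟩
      simp only [SimpleGraph.mem_edgeSet] at h3
      rw [← h1, ← h2]
      exact iff_of_eq h3
  -- lower bound on the size of D
  set D₁ := (M ×ˢ Sᶜ).image (fun p : Fin n × Fin n => s(p.1, p.2)) with hD₁def
  set D₂ := M.offDiag.image (fun p : Fin n × Fin n => s(p.1, p.2)) with hD₂def
  have hD₁card : D₁.card = M.card * (n - m) := by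
    have hinj1 : Set.InjOn (fun p : Fin n × Fin n => s(p.1, p.2)) ↑(M ×ˢ Sᶜ) := by
      intro p hp p' hp' hpp'
      simp only [Finset.coe_product, Set.mem_prod, Finset.mem_coe] at hp hp'
      simp only [Sym2.eq_iff] at hpp'
      rcases hpp' with ⟨h1, h2⟩ | ⟨h1, h2⟩
      · exact Prod.ext h1 h2
      · exfalso
        have hx : p.1 ∈ S := hMS hp.1
        rw [h1] at hx
        exact (Finset.mem_compl.mp hp'.2) hx
    rw [hD₁def, Finset.card_image_of_injOn hinj1, Finset.card_product,
      Finset.card_compl, Fintype.card_fin, hπ]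
  have hD₂card : M.card.choose 2 ≤ D₂.card := by
    have hoff : M.offDiag.card ≤ 2 * D₂.card := by
      rw [hD₂def]
      apply Finset.card_le_mul_card_image
      intro b hb
      obtain ⟨p, hp, rfl⟩ := Finset.mem_image.mp hb
      have hsub : (M.offDiag.filter (fun p' => s(p'.1, p'.2) = s(p.1, p.2)))
          ⊆ {p, (p.2, p.1)} := by
        intro p' hp'
        rw [Finset.mem_filter] at hp'
        have he := hp'.2
        rw [Sym2.eq_iff] at he
        rcases he with ⟨h1, h2⟩ | ⟨h1, h2⟩
        · exact Finset.mem_insert.mpr (Or.inl (Prod.ext h1 h2))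
        · refine Finset.mem_insert.mpr (Or.inr ?_)
          rw [Finset.mem_singleton]
          exact Prod.ext h1 h2
      calc (M.offDiag.filter (fun p' => s(p'.1, p'.2) = s(p.1, p.2))).card
          ≤ ({p, (p.2, p.1)} : Finset (Fin n × Fin n)).card := Finset.card_le_card hsub
        _ ≤ 2 := by
            refine le_trans (Finset.card_insert_le _ _) ?_
            simp
    have hM2 : M.offDiag.card = M.card * M.card - M.card := Finset.offDiag_card M
    have hmul : (M.card - 1) * M.card = M.card * M.card - M.card := by
      rw [tsub_mul, one_mul]
    have h4 : M.card * (M.card - 1) ≤ 2 * D₂.card := by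
      rw [mul_comm, hmul, ← hM2]
      exact hoff
    rw [Nat.choose_two_right]
    calc M.card * (M.card - 1) / 2 ≤ 2 * D₂.card / 2 := Nat.div_le_div_right h4
      _ = D₂.card := by omega
  have hdisj : Disjoint D₁ D₂ := by
    rw [Finset.disjoint_left]
    intro e he1 he2
    rw [hD₁def, Finset.mem_image] at he1
    obtain ⟨p, hp, rfl⟩ := he1
    rw [Finset.mem_product] at hp
    rw [hD₂def, Finset.mem_image] at he2
    obtain ⟨p', hp', hpe⟩ := he2
    have hmem := Finset.mem_offDiag.mp hp'
    have h2 : p.2 ∉ S := Finset.mem_compl.mp hp.2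
    rw [Sym2.eq_iff] at hpe
    rcases hpe with ⟨h1', h2'⟩ | ⟨h1', h2'⟩
    · exact h2 (hMS (h2' ▸ hmem.2.1))
    · exact h2 (hMS (h1' ▸ hmem.1))
  have hsubD : D₁ ∪ D₂ ⊆ D := by
    intro e he
    rw [hDdef, Finset.mem_filter]
    refine ⟨Finset.mem_univ _, ?_⟩
    rcases Finset.mem_union.mp he with he | he
    · rw [hD₁def, Finset.mem_image] at he
      obtain ⟨p, hp, rfl⟩ := he
      rw [Finset.mem_product] at hp
      have hp1M : p.1 ∈ M := hp.1
      have hp1S : p.1 ∈ S := hMS hp1M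
      have hp2S : p.2 ∉ S := Finset.mem_compl.mp hp.2
      have hp1R : p.1 ∉ R₀ := by
        have := hMdef ▸ hp1M
        exact (Finset.mem_sdiff.mp this).2
      refine ⟨?_, ⟨p.1, ?_, hp1M⟩, ?_⟩
      · rw [Sym2.isDiag_iff_proj_eq]
        intro h
        exact hp2S (h ▸ hp1S)
      · rw [Sym2.mem_iff]; exact Or.inl rfl
      · intro x hx
        rw [Sym2.mem_iff] at hx
        rcases hx with rfl | rfl
        · exact hp1R
        · exact fun hc => hp2S (hR₀S hc)
    · rw [hD₂def, Finset.mem_image] at he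
      obtain ⟨p, hp, rfl⟩ := he
      have hmem := Finset.mem_offDiag.mp hp
      have h1R : p.1 ∉ R₀ := (Finset.mem_sdiff.mp (hMdef ▸ hmem.1)).2
      have h2R : p.2 ∉ R₀ := (Finset.mem_sdiff.mp (hMdef ▸ hmem.2.1)).2
      refine ⟨?_, ⟨p.1, ?_, hmem.1⟩, ?_⟩
      · rw [Sym2.isDiag_iff_proj_eq]
        exact hmem.2.2
      · rw [Sym2.mem_iff]; exact Or.inl rfl
      · intro x hx
        rw [Sym2.mem_iff] at hx
        rcases hx with rfl | rfl
        · exact h1R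
        · exact h2R
  have hDcard : (m - m / 2) * (n - m) + (m - m / 2).choose 2 ≤ D.card := by
    have h1 : D₁.card + D₂.card ≤ D.card := by
      rw [← Finset.card_union_of_disjoint hdisj]
      exact Finset.card_le_card hsubD
    have h2 : (m - m / 2) * (n - m) ≤ D₁.card := by
      rw [hD₁card]
      exact Nat.mul_le_mul_right _ hMcard
    have h3 : (m - m / 2).choose 2 ≤ D₂.card :=
      le_trans (Nat.choose_le_choose 2 hMcard) hD₂card
    omega
  have hRcard : R.card = n.choose 2 - D.card := by
    rw [hRdef, Finset.card_sdiff_of_subset hDN, hNcard]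
  have hDle : D.card ≤ n.choose 2 := by
    rw [← hNcard]
    exact Finset.card_le_card hDN
  constructor
  · refine le_trans hinj ?_
    apply Nat.pow_le_pow_right (by norm_num)
    rw [hRcard]
    exact Nat.sub_le_sub_left hDcard _
  · exact le_trans hDcard hDle

end ProbAutAux

open ProbAutAux

/-- For a uniformly random graph `G` on `n` vertices (each edge present independently
with probability `1/2`) and `2 ≤ m ≤ n`, the probability that `G` has an automorphism
moving exactly `m` vertices is at most `2^{-m(n/2 - 3m/8 - 2·log₂ n)}`. -/
theorem prob_automorphism_moving_m (n m : ℕ) (hm2 : 2 ≤ m) (hmn : m ≤ n) :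
    (Nat.card {G : SimpleGraph (Fin n) //
        ∃ π : Equiv.Perm (Fin n),
          (∀ u v, G.Adj (π u) (π v) ↔ G.Adj u v) ∧ π.support.card = m} : ℝ)
        / 2 ^ n.choose 2
      ≤ (2 : ℝ) ^ (-(m : ℝ) * ((n : ℝ) / 2 - 3 * (m : ℝ) / 8 - 2 * Real.logb 2 n)) := by
  have hn2 : 2 ≤ n := le_trans hm2 hmn
  have hN : (Nat.card {G : SimpleGraph (Fin n) //
      ∃ π : Equiv.Perm (Fin n),
        (∀ u v, G.Adj (π u) (π v) ↔ G.Adj u v) ∧ π.support.card = m})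
      = ((univ : Finset (SimpleGraph (Fin n))).filter
          (fun G => ∃ π : Equiv.Perm (Fin n),
            (∀ u v, G.Adj (π u) (π v) ↔ G.Adj u v) ∧ π.support.card = m)).card := by
    rw [Nat.card_eq_fintype_card, Fintype.card_subtype]
  rw [hN]
  set A := ((univ : Finset (SimpleGraph (Fin n))).filter
      (fun G => ∃ π : Equiv.Perm (Fin n),
        (∀ u v, G.Adj (π u) (π v) ↔ G.Adj u v) ∧ π.support.card = m)).card with hAdef
  by_cases hzero : A = 0
  · rw [hzero, Nat.cast_zero, zero_div]
    exact le_of_lt (Real.rpow_pos_of_pos two_pos _)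
  · -- extract a witness permutation
    have hApos : 0 < A := Nat.pos_of_ne_zero hzero
    rw [hAdef, Finset.card_pos] at hApos
    obtain ⟨G₀, hG₀⟩ := hApos
    rw [Finset.mem_filter] at hG₀
    obtain ⟨-, π₀, hfix₀, hsupp₀⟩ := hG₀
    set q := m - m / 2 with hqdef
    set d := q * (n - m) + q.choose 2 with hddef
    have hdle : d ≤ n.choose 2 := (card_fixed_le m hm2 hmn π₀ hsupp₀).2
    have step1 : A ≤ n.choose m * n ^ m * 2 ^ (n.choose 2 - d) := by
      have hsub : (univ : Finset (SimpleGraph (Fin n))).filter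
          (fun G => ∃ π : Equiv.Perm (Fin n),
            (∀ u v, G.Adj (π u) (π v) ↔ G.Adj u v) ∧ π.support.card = m)
          ⊆ ((univ : Finset (Equiv.Perm (Fin n))).filter
              (fun π => π.support.card = m)).biUnion
            (fun π => (univ : Finset (SimpleGraph (Fin n))).filter
              (fun G => ∀ u v, G.Adj (π u) (π v) ↔ G.Adj u v)) := by
        intro G hG
        rw [Finset.mem_filter] at hG
        obtain ⟨-, π, hfix, hsupp⟩ := hG
        rw [Finset.mem_biUnion]
        exact ⟨π, Finset.mem_filter.mpr ⟨Finset.mem_univ _, hsupp⟩,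
          Finset.mem_filter.mpr ⟨Finset.mem_univ _, hfix⟩⟩
      calc A ≤ _ := Finset.card_le_card hsub
        _ ≤ ∑ π ∈ (univ : Finset (Equiv.Perm (Fin n))).filter
              (fun π => π.support.card = m),
            ((univ : Finset (SimpleGraph (Fin n))).filter
              (fun G => ∀ u v, G.Adj (π u) (π v) ↔ G.Adj u v)).card :=
          Finset.card_biUnion_le
        _ ≤ ∑ _π ∈ (univ : Finset (Equiv.Perm (Fin n))).filter
              (fun π => π.support.card = m), 2 ^ (n.choose 2 - d) :=
          Finset.sum_le_sum (fun π hπ =>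
            (card_fixed_le m hm2 hmn π (Finset.mem_filter.mp hπ).2).1)
        _ = ((univ : Finset (Equiv.Perm (Fin n))).filter
              (fun π => π.support.card = m)).card * 2 ^ (n.choose 2 - d) := by
          rw [Finset.sum_const, smul_eq_mul]
        _ ≤ n.choose m * n ^ m * 2 ^ (n.choose 2 - d) :=
          Nat.mul_le_mul_right _ (card_perm_le m)
    have hchoose : n.choose m * 2 ^ (m - 1) ≤ n ^ m :=
      calc n.choose m * 2 ^ (m - 1) ≤ n.choose m * m.factorial :=
            Nat.mul_le_mul_left _ (two_pow_pred_le_factorial m)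
        _ = m.factorial * n.choose m := mul_comm _ _
        _ = n.descFactorial m := (Nat.descFactorial_eq_factorial_mul_choose n m).symm
        _ ≤ n ^ m := Nat.descFactorial_le_pow n m
    have stepN : A * (2 ^ (m - 1) * 2 ^ d) ≤ n ^ (2 * m) * 2 ^ n.choose 2 := by
      calc A * (2 ^ (m - 1) * 2 ^ d)
          ≤ n.choose m * n ^ m * 2 ^ (n.choose 2 - d) * (2 ^ (m - 1) * 2 ^ d) :=
            Nat.mul_le_mul_right _ step1
        _ = (n.choose m * 2 ^ (m - 1)) * n ^ m * (2 ^ (n.choose 2 - d) * 2 ^ d) := by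
            ring
        _ ≤ n ^ m * n ^ m * (2 ^ (n.choose 2 - d) * 2 ^ d) := by
            apply Nat.mul_le_mul_right
            exact Nat.mul_le_mul_right _ hchoose
        _ = n ^ (2 * m) * 2 ^ n.choose 2 := by
            rw [← pow_add, ← pow_add, Nat.sub_add_cancel hdle, two_mul]
    -- move to the reals
    have hposC : (0 : ℝ) < 2 ^ n.choose 2 := by positivity
    rw [div_le_iff₀ hposC]
    have hposmd : (0 : ℝ) < 2 ^ (m - 1) * 2 ^ d := by positivity
    have hAreal : (A : ℝ) * (2 ^ (m - 1) * 2 ^ d) ≤ (n : ℝ) ^ (2 * m) * 2 ^ n.choose 2 := by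
      exact_mod_cast stepN
    have hA2 : (A : ℝ) ≤ ((n : ℝ) ^ (2 * m) / (2 ^ (m - 1) * 2 ^ d)) * 2 ^ n.choose 2 := by
      rw [div_mul_eq_mul_div, le_div_iff₀ hposmd]
      exact hAreal
    refine le_trans hA2 ?_
    apply mul_le_mul_of_nonneg_right ?_ (le_of_lt hposC)
    -- key : n ^ (2m) / (2^(m-1) 2^d) ≤ 2 ^ E
    rw [div_le_iff₀ hposmd]
    have hnpos : (0 : ℝ) < (n : ℝ) := by exact_mod_cast Nat.pos_of_ne_zero (by omega)
    have hLn : (n : ℝ) = (2 : ℝ) ^ Real.logb 2 n :=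
      (Real.rpow_logb two_pos (by norm_num) hnpos).symm
    have h2m : ((n : ℝ)) ^ (2 * m) = (2 : ℝ) ^ (Real.logb 2 n * ((2 * m : ℕ) : ℝ)) := by
      rw [Real.rpow_mul (le_of_lt two_pos), Real.rpow_natCast, ← hLn]
    have hmd : (2 : ℝ) ^ (m - 1) * 2 ^ d
        = (2 : ℝ) ^ (((m - 1 : ℕ) : ℝ) + ((d : ℕ) : ℝ)) := by
      rw [Real.rpow_add two_pos, Real.rpow_natCast, Real.rpow_natCast]
    rw [h2m, hmd, ← Real.rpow_add two_pos]
    apply (Real.rpow_le_rpow_left_iff (x := 2) one_lt_two).mpr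
    have hq1 : (m : ℝ) / 2 ≤ (q : ℝ) := by
      have h1 : ((m / 2 : ℕ) : ℝ) ≤ (m : ℝ) / 2 := Nat.cast_div_le
      have h2 : (q : ℝ) = (m : ℝ) - ((m / 2 : ℕ) : ℝ) := by
        rw [hqdef, Nat.cast_sub (Nat.div_le_self m 2)]
      linarith
    have hdr : ((d : ℕ) : ℝ) = (q : ℝ) * ((n : ℝ) - (m : ℝ)) + (q : ℝ) * ((q : ℝ) - 1) / 2 := by
      rw [hddef]
      push_cast [Nat.cast_sub hmn, Nat.cast_choose_two]
      ring
    have hm1 : ((m - 1 : ℕ) : ℝ) = (m : ℝ) - 1 := by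
      rw [Nat.cast_sub (by omega)]
      norm_num
    have hmr : (2 : ℝ) ≤ (m : ℝ) := by exact_mod_cast hm2
    have hnr : (m : ℝ) ≤ (n : ℝ) := by exact_mod_cast hmn
    rw [hdr, hm1]
    push_cast
    nlinarith [mul_nonneg (by linarith : (0:ℝ) ≤ (q:ℝ) - (m:ℝ)/2)
        (by linarith : (0:ℝ) ≤ (n:ℝ) - (m:ℝ)),
      mul_nonneg (by linarith : (0:ℝ) ≤ (q:ℝ) - (m:ℝ)/2)
        (by linarith : (0:ℝ) ≤ (q:ℝ) + (m:ℝ)/2 - 1)]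
end

section
/- (Baranyai-type partition) Let k divide n. The binom(n,k) k-element subsets of an n-element set can be partitioned into binom(n,k)/(n/k) families, each family being a partition of the n-element set into n/k pairwise disjoint k-element subsets; in particular each k-subset belongs to exactly one such family. -/
open scoped Classical
open Finset
namespace BaranyaiAux
lemma frac_hall {ι α : Type*} [Fintype ι] [DecidableEq α]
    (t : ι → Finset α) (B : ℕ) (hB : 0 < B) (w : ι → α → ℕ)
    (hin : ∀ x : ι, B ≤ ∑ a ∈ t x, w x a)
    (hload : ∀ a : α, ∑ x ∈ Finset.univ.filter (fun x => a ∈ t x), w x a ≤ B)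
    (s : Finset ι) : s.card ≤ (s.biUnion t).card := by
  have key : B * s.card ≤ B * (s.biUnion t).card := by
    calc B * s.card = ∑ _x ∈ s, B := by rw [Finset.sum_const, smul_eq_mul, mul_comm]
      _ ≤ ∑ x ∈ s, ∑ a ∈ t x, w x a := Finset.sum_le_sum fun x _ => hin x
      _ = ∑ x ∈ s, ∑ a ∈ (s.biUnion t), if a ∈ t x then w x a else 0 := by
          refine Finset.sum_congr rfl fun x hx => ?_
          rw [← Finset.sum_filter, Finset.filter_mem_eq_inter,
            Finset.inter_eq_right.mpr (Finset.subset_biUnion_of_mem t hx)]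
      _ = ∑ a ∈ (s.biUnion t), ∑ x ∈ s, if a ∈ t x then w x a else 0 := Finset.sum_comm
      _ ≤ ∑ _a ∈ (s.biUnion t), B := by
          refine Finset.sum_le_sum fun a _ => ?_
          calc ∑ x ∈ s, (if a ∈ t x then w x a else 0)
              = ∑ x ∈ s.filter (fun x => a ∈ t x), w x a := (Finset.sum_filter _ _).symm
            _ ≤ ∑ x ∈ Finset.univ.filter (fun x => a ∈ t x), w x a :=
                Finset.sum_le_sum_of_subset
                  (Finset.filter_subset_filter _ (Finset.subset_univ s))
            _ ≤ B := hload a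
      _ = B * (s.biUnion t).card := by rw [Finset.sum_const, smul_eq_mul, mul_comm]
  exact Nat.le_of_mul_le_mul_left key hB

lemma sum_choose_powerset {V : Type*} [DecidableEq V] (M : Finset V) (K c : ℕ) :
    ∑ A ∈ M.powerset.filter (fun A => A.card ≤ K), c.choose (K - A.card)
      = (M.card + c).choose K := by
  have hsplit : M.powerset.filter (fun A => A.card ≤ K)
      = (Finset.range (K+1)).biUnion (fun p => M.powersetCard p) := by
    ext A
    simp only [mem_filter, mem_powerset, mem_biUnion, mem_range, mem_powersetCard]
    constructor
    · rintro ⟨h1, h2⟩; exact ⟨A.card, by omega, h1, rfl⟩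
    · rintro ⟨p, hp, h1, rfl⟩; exact ⟨h1, by omega⟩
  rw [hsplit, Finset.sum_biUnion]
  · have : ∀ p ∈ Finset.range (K+1),
        ∑ A ∈ M.powersetCard p, c.choose (K - A.card)
          = M.card.choose p * c.choose (K - p) := by
      intro p _
      rw [Finset.sum_congr rfl (fun A hA => by
        rw [(Finset.mem_powersetCard.1 hA).2]), Finset.sum_const,
        Finset.card_powersetCard, smul_eq_mul]
    rw [Finset.sum_congr rfl this, Nat.add_choose_eq,
      Finset.Nat.sum_antidiagonal_eq_sum_range_succ_mk]
  · intro p hp q hq hpq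
    simp only [Finset.disjoint_left, Finset.mem_coe, Finset.mem_powersetCard]
    rintro A ⟨_, rfl⟩ ⟨_, h⟩
    exact hpq h

lemma choose_id (n k N : ℕ) (hk : 0 < k) (h0 : 0 < n) (hn : n = k * N) :
    n.choose k = N * (n-1).choose (k-1) := by
  have e1 : n * (n-1).choose (k-1) = n.choose k * k := by
    have := Nat.add_one_mul_choose_eq (n-1) (k-1)
    rwa [Nat.sub_add_cancel h0, Nat.sub_add_cancel hk] at this
  refine Nat.eq_of_mul_eq_mul_right hk ?_
  calc n.choose k * k = n * (n-1).choose (k-1) := e1.symm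
    _ = (N * (n-1).choose (k-1)) * k := by rw [hn]; ring

structure BS {V : Type*} [Fintype V] [DecidableEq V] (n k N h : ℕ)
    (M : Finset V) (P : Fin h → Finset (Finset V)) : Prop where
  subM : ∀ i, ∀ A ∈ P i, A ⊆ M
  nonemp : ∀ i, ∀ A ∈ P i, A.Nonempty
  cardle : ∀ i, ∀ A ∈ P i, A.card ≤ k
  disj : ∀ i, ∀ A ∈ P i, ∀ B ∈ P i, A ≠ B → Disjoint A B
  parts_le : ∀ i, (P i).card ≤ N
  cover : ∀ i, (P i).biUnion id = M
  count : ∀ A : Finset V, A ⊆ M → A.Nonempty → A.card ≤ k →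
    (Finset.univ.filter fun i : Fin h => A ∈ P i).card = (n - M.card).choose (k - A.card)

variable {V : Type*} [Fintype V] [DecidableEq V]

lemma step (n k N h : ℕ) (hk0 : 0 < k)
    (hn : n = k * N) (hhN : h * N = n.choose k)
    (M : Finset V) (P : Fin h → Finset (Finset V)) (x : V) (hx : x ∉ M)
    (hmn : M.card < n) (st : BS n k N h M P) :
    ∃ P' : Fin h → Finset (Finset V), BS n k N h (insert x M) P' := by
  have hNpos : 0 < N := by
    rcases Nat.eq_zero_or_pos N with h0 | h0
    · subst h0; simp at hn; omega
    · exact h0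
  set m := M.card with hm
  set c := n - m with hc
  have hc1 : 1 ≤ c := by omega
  -- the finset of "targets"
  set filt : Finset (Finset V) := M.powerset.filter (fun A => A.card < k) with hfilt
  set T : Finset (Finset V × ℕ) := filt.biUnion
      (fun A => (Finset.range ((c-1).choose (k - A.card - 1))).image fun j => (A, j)) with hT
  have pdisjT : ∀ A ∈ filt, ∀ A' ∈ filt, A ≠ A' →
      Disjoint ((Finset.range ((c-1).choose (k - A.card - 1))).image fun j => (A, j))
        ((Finset.range ((c-1).choose (k - A'.card - 1))).image fun j => (A', j)) := by
    intro A _ A' _ hne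
    simp only [disjoint_left, mem_image, mem_range]
    rintro p ⟨j, _, rfl⟩ ⟨j', _, he⟩
    exact hne ((congrArg Prod.fst he).symm)
  have memT : ∀ p : Finset V × ℕ,
      p ∈ T ↔ p.1 ⊆ M ∧ p.1.card < k ∧ p.2 < (c-1).choose (k - p.1.card - 1) := by
    intro p
    simp only [hT, hfilt, mem_biUnion, mem_filter, mem_powerset, mem_image, mem_range]
    constructor
    · rintro ⟨A, ⟨hA1, hA2⟩, j, hj, rfl⟩; exact ⟨hA1, hA2, hj⟩
    · rintro ⟨h1, h2, h3⟩; exact ⟨p.1, ⟨h1, h2⟩, p.2, h3, rfl⟩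
  -- bipartite graph and weights
  set traw : Finset V × ℕ → Finset (Fin h) := fun p =>
    if p.1 = ∅ then Finset.univ.filter (fun i => (P i).card < N)
    else Finset.univ.filter (fun i => p.1 ∈ P i) with htraw
  set wraw : Finset V × ℕ → Fin h → ℕ := fun p i =>
    if p.1 = ∅ then (N - (P i).card) * (Nat.factorial k * Nat.factorial (c - k))
    else Nat.factorial (k - p.1.card) * Nat.factorial (c - (k - p.1.card)) with hwraw
  -- total number of parts
  have sum_parts : (∑ i : Fin h, (P i).card) + c.choose k = n.choose k := by
    set S : Finset (Finset V) := M.powerset.filter (fun A => A.Nonempty ∧ A.card ≤ k) with hS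
    have e1 : ∀ i : Fin h, (P i).card = (S.filter (fun A => A ∈ P i)).card := by
      intro i
      have e : S.filter (fun A => A ∈ P i) = P i := by
        ext A
        simp only [hS, mem_filter, mem_powerset]
        constructor
        · rintro ⟨_, hA⟩; exact hA
        · intro hA; exact ⟨⟨st.subM i A hA, st.nonemp i A hA, st.cardle i A hA⟩, hA⟩
      rw [e]
    have e2 : ∑ i : Fin h, (P i).card
        = ∑ A ∈ S, (Finset.univ.filter fun i : Fin h => A ∈ P i).card := by
      simp only [e1, Finset.card_filter]
      rw [Finset.sum_comm]
    have e3 : ∀ A ∈ S, (Finset.univ.filter fun i : Fin h => A ∈ P i).card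
        = c.choose (k - A.card) := by
      intro A hA
      simp only [hS, mem_filter, mem_powerset] at hA
      exact st.count A hA.1 hA.2.1 hA.2.2
    rw [e2, Finset.sum_congr rfl e3]
    have e4 : S = (M.powerset.filter (fun A => A.card ≤ k)).erase ∅ := by
      ext A
      simp only [hS, mem_filter, mem_powerset, mem_erase, Finset.nonempty_iff_ne_empty]
      tauto
    have hmem0 : (∅ : Finset V) ∈ M.powerset.filter (fun A => A.card ≤ k) := by
      simp
    have e5 := Finset.sum_erase_add (M.powerset.filter (fun A => A.card ≤ k))
      (fun A => c.choose (k - A.card)) hmem0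
    simp only [card_empty, Nat.sub_zero] at e5
    rw [e4, e5, sum_choose_powerset]
    congr 1
    omega
  -- inflow at each target is exactly c!
  have keyfac' : ∀ q : ℕ, 1 ≤ q → q ≤ c →
      (c-1).choose (q-1) * (q.factorial * (c-q).factorial) = q * (c-1).factorial := by
    intro q hq hqc
    have h1 : q - 1 ≤ c - 1 := by omega
    have h2 := Nat.choose_mul_factorial_mul_factorial h1
    have h3 : (c-1) - (q-1) = c - q := by omega
    rw [h3] at h2
    calc (c-1).choose (q-1) * (q.factorial * (c-q).factorial)
        = q * ((c-1).choose (q-1) * (q-1).factorial * (c-q).factorial) := by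
          rw [← Nat.mul_factorial_pred (Nat.one_le_iff_ne_zero.mp hq)]; ring
      _ = q * (c-1).factorial := by rw [h2]
  have keyfac : ∀ q : ℕ, 1 ≤ q →
      (c-1).choose (q-1) * (q.factorial * (c-q).factorial) ≤ q * (c-1).factorial := by
    intro q hq
    rcases le_or_gt q c with hqc | hqc
    · exact le_of_eq (keyfac' q hq hqc)
    · have hz : (c-1).choose (q-1) = 0 := Nat.choose_eq_zero_of_lt (by omega)
      rw [hz, zero_mul]
      exact Nat.zero_le _
  have hin : ∀ w : {p // p ∈ T}, Nat.factorial c ≤ ∑ a ∈ traw w.1, wraw w.1 a := by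
    rintro ⟨⟨A, j⟩, hw⟩
    have hwT := (memT (A, j)).1 hw
    obtain ⟨hAM, hAk, hj⟩ := hwT
    have hCpos : 0 < (c-1).choose (k - A.card - 1) := lt_of_le_of_lt (Nat.zero_le _) hj
    have hqc : k - A.card ≤ c := by
      by_contra hgt
      push_neg at hgt
      have : (c-1).choose (k - A.card - 1) = 0 := Nat.choose_eq_zero_of_lt (by omega)
      omega
    by_cases he : A = ∅
    · subst he
      simp only [htraw, hwraw, eq_self_iff_true, if_true, card_empty, Nat.sub_zero]
      have hkc : k ≤ c := by
        have : k - (∅ : Finset V).card = k := by rw [card_empty, Nat.sub_zero]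
        simp only [card_empty, Nat.sub_zero] at hCpos hqc hj
        by_contra hgt
        push_neg at hgt
        have : (c-1).choose (k - 1) = 0 := Nat.choose_eq_zero_of_lt (by omega)
        omega
      have hext : ∑ i ∈ Finset.univ.filter (fun i => (P i).card < N),
            (N - (P i).card) * (k.factorial * (c-k).factorial)
          = ∑ i : Fin h, (N - (P i).card) * (k.factorial * (c-k).factorial) := by
        apply Finset.sum_subset (Finset.filter_subset _ _)
        intro i _ hni
        simp only [mem_filter, mem_univ, true_and, not_lt] at hni
        have hz : N - (P i).card = 0 := by omega
        rw [hz, zero_mul]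
      rw [hext, ← Finset.sum_mul]
      have e6 : ∑ i : Fin h, (N - (P i).card) = c.choose k := by
        have e7 : (∑ i : Fin h, (N - (P i).card)) + ∑ i : Fin h, (P i).card = h * N := by
          rw [← Finset.sum_add_distrib]
          rw [Finset.sum_congr rfl (fun i _ => Nat.sub_add_cancel (st.parts_le i)),
            Finset.sum_const, Finset.card_univ, Fintype.card_fin, smul_eq_mul]
        omega
      rw [e6]
      have hfin : c.choose k * (k.factorial * (c-k).factorial) = c.factorial := by
        rw [← mul_assoc, Nat.choose_mul_factorial_mul_factorial hkc]
      rw [hfin]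
    · simp only [htraw, hwraw, if_neg he]
      rw [Finset.sum_const, st.count A hAM (Finset.nonempty_iff_ne_empty.2 he) (le_of_lt hAk),
        smul_eq_mul, ← mul_assoc,
        Nat.choose_mul_factorial_mul_factorial hqc]
  -- load at each partition is at most c!
  have hload : ∀ i : Fin h,
      ∑ w ∈ Finset.univ.filter (fun w : {p // p ∈ T} => i ∈ traw w.1), wraw w.1 i
        ≤ Nat.factorial c := by
    intro i
    have e1 : ∑ w ∈ Finset.univ.filter (fun w : {p // p ∈ T} => i ∈ traw w.1), wraw w.1 i
        = ∑ p ∈ T, (if i ∈ traw p then wraw p i else 0) := by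
      rw [Finset.sum_filter]
      exact Finset.sum_coe_sort T (fun p => if i ∈ traw p then wraw p i else 0)
    rw [e1, hT, Finset.sum_biUnion pdisjT]
    have e2 : ∀ A ∈ filt,
        (∑ p ∈ (Finset.range ((c-1).choose (k - A.card - 1))).image (fun j => (A, j)),
          (if i ∈ traw p then wraw p i else 0))
        = (c-1).choose (k - A.card - 1) * (if i ∈ traw (A, 0) then wraw (A, 0) i else 0) := by
      intro A _
      rw [Finset.sum_image (fun a _ b _ hab => (Prod.mk.inj hab).2)]
      have : ∀ j ∈ Finset.range ((c-1).choose (k - A.card - 1)),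
          (if i ∈ traw (A, j) then wraw (A, j) i else 0)
            = (if i ∈ traw (A, 0) then wraw (A, 0) i else 0) := by
        intro j _
        rfl
      rw [Finset.sum_congr rfl this, Finset.sum_const, Finset.card_range, smul_eq_mul]
    rw [Finset.sum_congr rfl e2]
    -- bound each term
    have hbnd : ∀ A ∈ filt,
        (c-1).choose (k - A.card - 1) * (if i ∈ traw (A, 0) then wraw (A, 0) i else 0)
          ≤ (if A = ∅ then (N - (P i).card) * k
             else if A ∈ P i then k - A.card else 0) * (c-1).factorial := by
      intro A hA
      have hAk : A.card < k := by
        rw [hfilt, mem_filter] at hA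
        exact hA.2
      by_cases he : A = ∅
      · subst he
        simp only [htraw, hwraw, eq_self_iff_true, if_true, card_empty, Nat.sub_zero]
        by_cases hPi : i ∈ Finset.univ.filter (fun i => (P i).card < N)
        · rw [if_pos hPi]
          calc (c-1).choose (k - 1)
                * ((N - (P i).card) * (k.factorial * (c-k).factorial))
              = (N - (P i).card) * ((c-1).choose (k-1) * (k.factorial * (c-k).factorial)) := by
                ring
            _ ≤ (N - (P i).card) * (k * (c-1).factorial) :=
                Nat.mul_le_mul_left _ (keyfac k hk0)
            _ = (N - (P i).card) * k * (c-1).factorial := by ring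
        · rw [if_neg hPi, mul_zero]
          exact Nat.zero_le _
      · simp only [htraw, hwraw, if_neg he]
        by_cases hPi : A ∈ P i
        · have hmem : i ∈ Finset.univ.filter (fun i => A ∈ P i) := by
            rw [mem_filter]; exact ⟨mem_univ _, hPi⟩
          rw [if_pos hmem, if_pos hPi]
          exact keyfac (k - A.card) (by omega)
        · have hmem : i ∉ Finset.univ.filter (fun i => A ∈ P i) := by
            rw [mem_filter]; tauto
          rw [if_neg hmem, if_neg hPi, mul_zero, zero_mul]
    calc ∑ A ∈ filt, (c-1).choose (k - A.card - 1) * (if i ∈ traw (A, 0) then wraw (A, 0) i else 0)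
        ≤ ∑ A ∈ filt, (if A = ∅ then (N - (P i).card) * k
            else if A ∈ P i then k - A.card else 0) * (c-1).factorial :=
          Finset.sum_le_sum hbnd
      _ = (∑ A ∈ filt, (if A = ∅ then (N - (P i).card) * k
            else if A ∈ P i then k - A.card else 0)) * (c-1).factorial := by
          rw [Finset.sum_mul]
      _ ≤ c * (c-1).factorial := ?_
      _ = c.factorial := by
          rw [Nat.mul_factorial_pred (Nat.one_le_iff_ne_zero.mp hc1)]
    apply Nat.mul_le_mul_right
    -- sum of the combinatorial weights is at most c
    have hmem0 : (∅ : Finset V) ∈ filt := by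
      rw [hfilt, mem_filter]
      exact ⟨Finset.empty_mem_powerset M, by rw [card_empty]; omega⟩
    rw [← Finset.sum_erase_add filt _ hmem0, if_pos rfl]
    have e3 : ∑ A ∈ filt.erase ∅, (if A = ∅ then (N - (P i).card) * k
          else if A ∈ P i then k - A.card else 0)
        = ∑ A ∈ (filt.erase ∅).filter (fun A => A ∈ P i), (k - A.card) := by
      rw [Finset.sum_filter]
      apply Finset.sum_congr rfl
      intro A hA
      rw [if_neg (Finset.mem_erase.1 hA).1]
    rw [e3]
    have e4 : ∑ A ∈ (filt.erase ∅).filter (fun A => A ∈ P i), (k - A.card)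
        ≤ ∑ A ∈ P i, (k - A.card) := by
      apply Finset.sum_le_sum_of_subset
      intro A hA
      exact (Finset.mem_filter.1 hA).2
    have hsumcard : ∑ A ∈ P i, A.card = m := by
      have hb := Finset.card_biUnion (t := id) (st.disj i)
      rw [st.cover i] at hb
      simp only [id_eq] at hb
      exact hb.symm
    have hsumk : (∑ A ∈ P i, (k - A.card)) + m = k * (P i).card := by
      rw [← hsumcard, ← Finset.sum_add_distrib]
      rw [Finset.sum_congr rfl (fun A hA => Nat.sub_add_cancel (st.cardle i A hA)),
        Finset.sum_const, smul_eq_mul, mul_comm]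
    have hPle : (P i).card ≤ N := st.parts_le i
    have hfinal : (N - (P i).card) * k + (∑ A ∈ P i, (k - A.card)) ≤ c := by
      have e5 : (N - (P i).card) * k = k * N - k * (P i).card := by
        rw [Nat.sub_mul, mul_comm, mul_comm (P i).card k]
      have e6 : (∑ A ∈ P i, (k - A.card)) = k * (P i).card - m :=
        Nat.eq_sub_of_add_eq hsumk
      have e7 : k * (P i).card ≤ k * N := Nat.mul_le_mul_left k hPle
      have e8 : m ≤ k * (P i).card := by omega
      rw [e5, e6, tsub_add_tsub_cancel e7 e8]
      omega
    omega
  -- Hall's theorem gives a matching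
  obtain ⟨F, Finj, hF⟩ := (Finset.all_card_le_biUnion_card_iff_exists_injective
      (fun w : {p // p ∈ T} => traw w.1)).1
    (fun s => frac_hall _ (Nat.factorial c) (Nat.factorial_pos c) (fun w i => wraw w.1 i)
      hin hload s)
  -- cardinality: the matching is a bijection
  have hTcard : T.card = (n-1).choose (k-1) := by
    rw [hT, Finset.card_biUnion pdisjT]
    have e1 : ∀ A ∈ filt,
        ((Finset.range ((c-1).choose (k - A.card - 1))).image fun j => (A, j)).card
          = (c-1).choose ((k-1) - A.card) := by
      intro A _
      rw [Finset.card_image_of_injective _ (fun a b hab => (Prod.mk.inj hab).2),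
        Finset.card_range]
      congr 1
      omega
    rw [Finset.sum_congr rfl e1]
    have e2 : filt = M.powerset.filter (fun A => A.card ≤ k-1) := by
      rw [hfilt]
      apply Finset.filter_congr
      intro A _
      constructor
      · intro hlt; omega
      · intro hle; omega
    rw [e2, sum_choose_powerset M (k-1) (c-1)]
    congr 1
    omega
  have hhval : h = (n-1).choose (k-1) := by
    have e := choose_id n k N hk0 (by omega) hn
    refine Nat.eq_of_mul_eq_mul_left hNpos ?_
    rw [mul_comm N h, hhN, e]
  have Fbij : Function.Bijective F := by
    refine (Fintype.bijective_iff_injective_and_card F).2 ⟨Finj, ?_⟩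
    rw [Fintype.card_coe, hTcard, Fintype.card_fin, hhval]
  set E : {p // p ∈ T} ≃ Fin h := Equiv.ofBijective F Fbij with hE
  set Ai : Fin h → Finset V := fun i => (E.symm i).1.1 with hAi
  have hAiT : ∀ i, Ai i ⊆ M ∧ (Ai i).card < k := by
    intro i
    have := (memT _).1 (E.symm i).2
    exact ⟨this.1, this.2.1⟩
  have hti : ∀ i : Fin h, i ∈ traw (E.symm i).1 := by
    intro i
    have h2 := hF (E.symm i)
    have h3 : F (E.symm i) = i := E.apply_symm_apply i
    rwa [h3] at h2
  have hti' : ∀ i : Fin h, if Ai i = ∅ then (P i).card < N else Ai i ∈ P i := by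
    intro i
    have h2 := hti i
    simp only [htraw] at h2
    simp only [hAi]
    by_cases he : (E.symm i).1.1 = ∅
    · rw [if_pos he] at h2
      rw [if_pos he]
      exact (mem_filter.1 h2).2
    · rw [if_neg he] at h2
      rw [if_neg he]
      exact (mem_filter.1 h2).2
  -- counting partitions whose matched target has a given first component
  have hcountA : ∀ A₀ : Finset V,
      (Finset.univ.filter fun i : Fin h => Ai i = A₀).card
        = if A₀ ⊆ M ∧ A₀.card < k then (c-1).choose (k - A₀.card - 1) else 0 := by
    intro A₀
    have key : (Finset.univ.filter fun i : Fin h => Ai i = A₀).card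
        = (T.filter fun p => p.1 = A₀).card := by
      apply Finset.card_bij (fun i _ => (E.symm i).1)
      · intro i hi
        rw [mem_filter]
        exact ⟨(E.symm i).2, (mem_filter.1 hi).2⟩
      · intro a ha b hb hab
        exact E.symm.injective (Subtype.ext hab)
      · intro p hp
        rw [mem_filter] at hp
        refine ⟨E ⟨p, hp.1⟩, ?_, ?_⟩
        · rw [mem_filter]
          refine ⟨mem_univ _, ?_⟩
          show (E.symm (E ⟨p, hp.1⟩)).1.1 = A₀
          rw [E.symm_apply_apply]
          exact hp.2
        · show ((E.symm (E ⟨p, hp.1⟩)) : Finset V × ℕ) = p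
          rw [E.symm_apply_apply]
    rw [key]
    by_cases hcond : A₀ ⊆ M ∧ A₀.card < k
    · rw [if_pos hcond]
      have e : T.filter (fun p => p.1 = A₀)
          = (Finset.range ((c-1).choose (k - A₀.card - 1))).image fun j => (A₀, j) := by
        ext p
        simp only [mem_filter, memT, mem_image, mem_range]
        constructor
        · rintro ⟨⟨h1, h2, h3⟩, h4⟩
          rw [h4] at h3
          exact ⟨p.2, h3, Prod.ext h4.symm rfl⟩
        · rintro ⟨j, hj, rfl⟩
          exact ⟨⟨hcond.1, hcond.2, hj⟩, rfl⟩
      rw [e, Finset.card_image_of_injective _ (fun a b hab => (Prod.mk.inj hab).2),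
        Finset.card_range]
    · rw [if_neg hcond, Finset.card_eq_zero, Finset.filter_eq_empty_iff]
      intro p hp heq
      have := (memT p).1 hp
      exact hcond ⟨heq ▸ this.1, heq ▸ this.2.1⟩
  -- the new system
  set P' : Fin h → Finset (Finset V) := fun i =>
    if Ai i = ∅ then insert {x} (P i)
    else insert (insert x (Ai i)) ((P i).erase (Ai i)) with hP'
  have memP'_old : ∀ (i : Fin h) (B : Finset V), x ∉ B →
      (B ∈ P' i ↔ B ∈ P i ∧ B ≠ Ai i) := by
    intro i B hxB
    simp only [hP']
    by_cases he : Ai i = ∅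
    · rw [if_pos he, mem_insert]
      constructor
      · rintro (rfl | hB)
        · exact absurd (mem_singleton_self x) hxB
        · refine ⟨hB, ?_⟩
          rw [he]
          exact (st.nonemp i B hB).ne_empty
      · rintro ⟨hB, _⟩; exact Or.inr hB
    · rw [if_neg he, mem_insert, mem_erase]
      constructor
      · rintro (rfl | ⟨hne, hB⟩)
        · exact absurd (mem_insert_self x _) hxB
        · exact ⟨hB, hne⟩
      · rintro ⟨hB, hne⟩; exact Or.inr ⟨hne, hB⟩
  have memP'_new : ∀ (i : Fin h) (B : Finset V), x ∈ B →
      (B ∈ P' i ↔ Ai i = B.erase x) := by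
    intro i B hxB
    have hnotP : B ∉ P i := fun hB => hx (st.subM i B hB hxB)
    simp only [hP']
    by_cases he : Ai i = ∅
    · rw [if_pos he, mem_insert]
      constructor
      · rintro (rfl | hB)
        · rw [he, Finset.erase_singleton]
        · exact absurd hB hnotP
      · intro hA
        left
        have hBe : B.erase x = ∅ := by rw [← hA, he]
        have := Finset.insert_erase hxB
        rw [hBe] at this
        rw [← this]
        rfl
    · rw [if_neg he, mem_insert, mem_erase]
      constructor
      · rintro (rfl | ⟨_, hB⟩)
        · rw [Finset.erase_insert (fun hxA => hx ((hAiT i).1 hxA))]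
        · exact absurd hB hnotP
      · intro hA
        left
        rw [hA, Finset.insert_erase hxB]
  have hxAi : ∀ i, x ∉ Ai i := fun i hxi => hx ((hAiT i).1 hxi)
  have hmemA : ∀ i, Ai i ≠ ∅ → Ai i ∈ P i := by
    intro i he
    have := hti' i
    rwa [if_neg he] at this
  have hcardM' : (insert x M).card = m + 1 := by
    rw [Finset.card_insert_of_notMem hx]
  refine ⟨P', ?_, ?_, ?_, ?_, ?_, ?_, ?_⟩
  · -- subM
    intro i B hB
    simp only [hP'] at hB
    by_cases he : Ai i = ∅
    · rw [if_pos he, mem_insert] at hB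
      rcases hB with rfl | hB
      · simp only [singleton_subset_iff]
        exact mem_insert_self x M
      · exact (st.subM i B hB).trans (subset_insert x M)
    · rw [if_neg he, mem_insert] at hB
      rcases hB with rfl | hB
      · exact insert_subset_insert x (hAiT i).1
      · exact (st.subM i B (mem_of_mem_erase hB)).trans (subset_insert x M)
  · -- nonemp
    intro i B hB
    simp only [hP'] at hB
    by_cases he : Ai i = ∅
    · rw [if_pos he, mem_insert] at hB
      rcases hB with rfl | hB
      · exact singleton_nonempty x
      · exact st.nonemp i B hB
    · rw [if_neg he, mem_insert] at hB
      rcases hB with rfl | hB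
      · exact insert_nonempty _ _
      · exact st.nonemp i B (mem_of_mem_erase hB)
  · -- cardle
    intro i B hB
    simp only [hP'] at hB
    by_cases he : Ai i = ∅
    · rw [if_pos he, mem_insert] at hB
      rcases hB with rfl | hB
      · rw [card_singleton]; omega
      · exact st.cardle i B hB
    · rw [if_neg he, mem_insert] at hB
      rcases hB with rfl | hB
      · have := (hAiT i).2
        have h2 := Finset.card_insert_le x (Ai i)
        omega
      · exact st.cardle i B (mem_of_mem_erase hB)
  · -- disj
    intro i B hB B' hB' hne
    simp only [hP'] at hB hB'
    by_cases he : Ai i = ∅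
    · rw [if_pos he, mem_insert] at hB hB'
      have hdx : ∀ C ∈ P i, Disjoint ({x} : Finset V) C := fun C hC =>
        Finset.disjoint_singleton_left.2 (fun hxC => hx (st.subM i C hC hxC))
      rcases hB with rfl | hB <;> rcases hB' with rfl | hB'
      · exact absurd rfl hne
      · exact hdx _ hB'
      · exact (hdx _ hB).symm
      · exact st.disj i B hB B' hB' hne
    · rw [if_neg he, mem_insert] at hB hB'
      have hdx : ∀ C ∈ (P i).erase (Ai i), Disjoint (insert x (Ai i)) C := by
        intro C hC
        refine Finset.disjoint_left.2 ?_
        intro a haI haC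
        rcases mem_insert.1 haI with rfl | haA
        · exact hx (st.subM i C (mem_of_mem_erase hC) haC)
        · exact Finset.disjoint_left.1
            (st.disj i (Ai i) (hmemA i he) C (mem_of_mem_erase hC)
              (Ne.symm (mem_erase.1 hC).1)) haA haC
      rcases hB with rfl | hB <;> rcases hB' with rfl | hB'
      · exact absurd rfl hne
      · exact hdx _ hB'
      · exact (hdx _ hB).symm
      · exact st.disj i B (mem_of_mem_erase hB) B' (mem_of_mem_erase hB') hne
  · -- parts_le
    intro i
    simp only [hP']
    by_cases he : Ai i = ∅
    · rw [if_pos he]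
      have hlt : (P i).card < N := by
        have := hti' i
        rwa [if_pos he] at this
      exact le_trans (card_insert_le _ _) hlt
    · rw [if_neg he]
      calc (insert (insert x (Ai i)) ((P i).erase (Ai i))).card
          ≤ ((P i).erase (Ai i)).card + 1 := card_insert_le _ _
        _ = ((P i).card - 1) + 1 := by rw [card_erase_of_mem (hmemA i he)]
        _ ≤ (P i).card := by
            have := card_pos.2 ⟨_, hmemA i he⟩
            omega
        _ ≤ N := st.parts_le i
  · -- cover
    intro i
    simp only [hP']
    by_cases he : Ai i = ∅
    · rw [if_pos he, biUnion_insert, st.cover i]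
      show ({x} : Finset V) ∪ M = insert x M
      rw [Finset.insert_eq]
    · rw [if_neg he, biUnion_insert]
      have hsplit : (Ai i) ∪ ((P i).erase (Ai i)).biUnion id = M := by
        conv_rhs => rw [← st.cover i, ← Finset.insert_erase (hmemA i he)]
        rw [biUnion_insert]
        rfl
      show insert x (Ai i) ∪ ((P i).erase (Ai i)).biUnion id = insert x M
      rw [Finset.insert_union, hsplit]
  · -- count
    intro B hBsub hBne hBk
    by_cases hxB : x ∈ B
    · have e1 : (Finset.univ.filter fun i : Fin h => B ∈ P' i)
          = (Finset.univ.filter fun i : Fin h => Ai i = B.erase x) :=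
        Finset.filter_congr (fun i _ => memP'_new i B hxB)
      rw [e1, hcountA (B.erase x)]
      have hc1' : B.erase x ⊆ M := by
        intro a ha
        rcases mem_erase.1 ha with ⟨hax, haB⟩
        rcases mem_insert.1 (hBsub haB) with rfl | haM
        · exact absurd rfl hax
        · exact haM
      have hc2 : (B.erase x).card = B.card - 1 := card_erase_of_mem hxB
      have hBpos : 1 ≤ B.card := card_pos.2 hBne
      rw [if_pos ⟨hc1', by omega⟩, hc2, hcardM']
      congr 1 <;> omega
    · have hBM : B ⊆ M := by
        intro a ha
        rcases mem_insert.1 (hBsub ha) with rfl | haM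
        · exact absurd ha hxB
        · exact haM
      have e1 : (Finset.univ.filter fun i : Fin h => B ∈ P' i)
          = (Finset.univ.filter fun i : Fin h => B ∈ P i)
            \ (Finset.univ.filter fun i : Fin h => Ai i = B) := by
        ext i
        simp only [mem_filter, mem_sdiff, mem_univ, true_and]
        rw [memP'_old i B hxB]
        constructor
        · rintro ⟨h1, h2⟩; exact ⟨h1, fun he2 => h2 he2.symm⟩
        · rintro ⟨h1, h2⟩; exact ⟨h1, fun he2 => h2 he2.symm⟩
      have hsub2 : (Finset.univ.filter fun i : Fin h => Ai i = B)
          ⊆ (Finset.univ.filter fun i : Fin h => B ∈ P i) := by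
        intro i hi
        rw [mem_filter] at hi ⊢
        refine ⟨mem_univ _, ?_⟩
        have h3 := hmemA i (by rw [hi.2]; exact hBne.ne_empty)
        rwa [hi.2] at h3
      rw [e1, card_sdiff_of_subset hsub2, hcountA B, st.count B hBM hBne hBk, hcardM']
      by_cases hbk : B.card < k
      · rw [if_pos ⟨hBM, hbk⟩]
        have hq : 1 ≤ k - B.card := by omega
        have pasc : c.choose (k - B.card)
            = (c-1).choose (k - B.card - 1) + (c-1).choose (k - B.card) := by
          have hp := Nat.choose_succ_succ (c-1) (k - B.card - 1)
          simp only [Nat.succ_eq_add_one] at hp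
          rw [show c - 1 + 1 = c by omega, show k - B.card - 1 + 1 = k - B.card by omega] at hp
          exact hp
        have he9 : n - (m+1) = c - 1 := by omega
        rw [he9]
        have pasc' : (n - M.card).choose (k - B.card)
            = (c-1).choose (k - B.card - 1) + (c-1).choose (k - B.card) := pasc
        omega
      · rw [if_neg (by rintro ⟨_, hlt⟩; omega)]
        have hbk' : k - B.card = 0 := by omega
        rw [hbk']
        simp [Nat.choose_zero_right]


lemma exists_BS (n k N h : ℕ) (hk0 : 0 < k) (hn : n = k * N) (hhN : h * N = n.choose k)
    (hcard : Fintype.card V = n) (M : Finset V) :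
    ∃ P : Fin h → Finset (Finset V), BS n k N h M P := by
  induction M using Finset.induction_on with
  | empty =>
    refine ⟨fun _ => ∅, ?_, ?_, ?_, ?_, ?_, ?_, ?_⟩
    · intro i A hA; exact absurd hA (notMem_empty A)
    · intro i A hA; exact absurd hA (notMem_empty A)
    · intro i A hA; exact absurd hA (notMem_empty A)
    · intro i A hA; exact absurd hA (notMem_empty A)
    · intro i; simp
    · intro i; simp
    · intro A hsub hne _
      exact absurd (Finset.subset_empty.1 hsub) hne.ne_empty
  | @insert x M hx ih =>
    obtain ⟨P, hP⟩ := ih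
    have hmn : M.card < n := by
      have hss : M ⊂ Finset.univ :=
        Finset.ssubset_univ_iff.2 (fun hMu => hx (hMu ▸ mem_univ x))
      calc M.card < Finset.univ.card := Finset.card_lt_card hss
        _ = n := by rw [Finset.card_univ, hcard]
    exact step n k N h hk0 hn hhN M P x hx hmn hP

end BaranyaiAux

open BaranyaiAux in
/-- Baranyai-type partition: if `k ∣ n` (`k > 0`), the `binom(n,k)` `k`-element subsets
of an `n`-element set can be partitioned into `binom(n,k)/(n/k)` families, each family
being a partition of the `n`-element set into `n/k` pairwise disjoint `k`-element
subsets; each `k`-subset belongs to exactly one family. -/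
theorem baranyai_partition {V : Type*} [Fintype V] [DecidableEq V] (n k : ℕ)
    (hn : Fintype.card V = n) (hk : k ∣ n) (hk0 : 0 < k) :
    ∃ f : {S : Finset V // S.card = k} → Fin (n.choose k / (n / k)),
      ∀ i : Fin (n.choose k / (n / k)),
        (∀ S T : {S : Finset V // S.card = k},
            f S = i → f T = i → S ≠ T → Disjoint S.1 T.1) ∧
        (∀ v : V, ∃ S : {S : Finset V // S.card = k}, f S = i ∧ v ∈ S.1) ∧
        Nat.card {S : {S : Finset V // S.card = k} // f S = i} = n / k := by
  rcases Nat.eq_zero_or_pos n with h0 | h0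
  · subst h0
    have hempty : ∀ S : {S : Finset V // S.card = k}, False := by
      intro S
      have h1 : S.1.card ≤ Finset.univ.card := Finset.card_le_univ S.1
      rw [Finset.card_univ, hn] at h1
      have := S.2
      omega
    refine ⟨fun S => (hempty S).elim, ?_⟩
    intro i
    exfalso
    have hz : Nat.choose 0 k = 0 := Nat.choose_eq_zero_of_lt hk0
    have h2 := i.2
    have h3 : Nat.choose 0 k / (0 / k) = 0 := by rw [hz]; exact Nat.zero_div _
    omega
  · set N := n / k with hN
    have hnkN : n = k * N := (Nat.mul_div_cancel' hk).symm
    have hNpos : 0 < N := Nat.div_pos (Nat.le_of_dvd h0 hk) hk0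
    have hchoose : n.choose k = N * (n-1).choose (k-1) := choose_id n k N hk0 h0 hnkN
    set h := n.choose k / N with hhdef
    have hh : h = (n-1).choose (k-1) := by
      rw [hhdef, hchoose, Nat.mul_div_cancel_left _ hNpos]
    have hhN : h * N = n.choose k := by rw [hh, hchoose, mul_comm]
    obtain ⟨P, hP⟩ := exists_BS n k N h hk0 hnkN hhN hn Finset.univ
    have hsizek : ∀ i, ∀ A ∈ P i, A.card = k := by
      intro i A hA
      by_contra hne
      have hlt : A.card < k := lt_of_le_of_ne (hP.cardle i A hA) hne
      have hcnt := hP.count A (Finset.subset_univ A) (hP.nonemp i A hA) (hP.cardle i A hA)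
      rw [Finset.card_univ, hn, Nat.sub_self] at hcnt
      have hz : (0:ℕ).choose (k - A.card) = 0 := Nat.choose_eq_zero_of_lt (by omega)
      rw [hz, Finset.card_eq_zero] at hcnt
      have hmem : i ∈ Finset.univ.filter fun j => A ∈ P j := by
        rw [mem_filter]; exact ⟨mem_univ _, hA⟩
      rw [hcnt] at hmem
      exact absurd hmem (notMem_empty i)
    have huniq : ∀ S : Finset V, S.card = k → ∃ i, S ∈ P i ∧ ∀ j, S ∈ P j → j = i := by
      intro S hS
      have hcnt := hP.count S (Finset.subset_univ S)
        (by rw [← Finset.card_pos, hS]; exact hk0) (le_of_eq hS)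
      rw [Finset.card_univ, hn, Nat.sub_self, show k - S.card = 0 by omega,
        Nat.choose_zero_right, Finset.card_eq_one] at hcnt
      obtain ⟨i₀, hfil⟩ := hcnt
      have hmem : ∀ j : Fin h, S ∈ P j → j = i₀ := by
        intro j hj
        have : j ∈ Finset.univ.filter fun j => S ∈ P j := by
          rw [mem_filter]; exact ⟨mem_univ _, hj⟩
        rw [hfil, mem_singleton] at this
        exact this
      have hi₀ : S ∈ P i₀ := by
        have : i₀ ∈ ({i₀} : Finset (Fin h)) := mem_singleton_self i₀
        rw [← hfil, mem_filter] at this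
        exact this.2
      exact ⟨i₀, hi₀, hmem⟩
    choose fs hf1 hf2 using fun S : {S : Finset V // S.card = k} => huniq S.1 S.2
    refine ⟨fs, ?_⟩
    intro i
    refine ⟨?_, ?_, ?_⟩
    · intro S T hS hT hST
      exact hP.disj i S.1 (hS ▸ hf1 S) T.1 (hT ▸ hf1 T)
        (fun he => hST (Subtype.ext he))
    · intro v
      have hv : v ∈ (P i).biUnion id := by rw [hP.cover i]; exact mem_univ v
      rw [Finset.mem_biUnion] at hv
      obtain ⟨A, hA, hvA⟩ := hv
      exact ⟨⟨A, hsizek i A hA⟩, (hf2 ⟨A, hsizek i A hA⟩ i hA).symm, hvA⟩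
    · have hPiN : (P i).card = N := by
        have hb := Finset.card_biUnion (t := id) (hP.disj i)
        rw [hP.cover i] at hb
        simp only [id_eq] at hb
        rw [Finset.card_univ, hn] at hb
        rw [Finset.sum_congr rfl (fun A hA => hsizek i A hA), Finset.sum_const,
          smul_eq_mul] at hb
        have he : (P i).card * k = N * k := by
          rw [← hb, hnkN]; ring
        exact Nat.eq_of_mul_eq_mul_right hk0 he
      have hequiv : {S : {S : Finset V // S.card = k} // fs S = i}
          ≃ {A : Finset V // A ∈ P i} :=
        { toFun := fun S => ⟨S.1.1, by have h9 := hf1 S.1; rwa [S.2] at h9⟩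
          invFun := fun A => ⟨⟨A.1, hsizek i A.1 A.2⟩,
            (hf2 ⟨A.1, hsizek i A.1 A.2⟩ i A.2).symm⟩
          left_inv := fun S => Subtype.ext (Subtype.ext rfl)
          right_inv := fun A => Subtype.ext rfl }
      rw [Nat.card_congr hequiv, Nat.card_eq_fintype_card, Fintype.card_coe, hPiN]
end

section
/- For k ≤ √(2 log₂ n) and n sufficiently large, the inequality α < (n/k)·p holds, where p = 2^{-k(k-1)/2} and α = (binom(k,2) + 2 log₂ binom(k,2) + δ(n) + log₂(binom(n,k)/(n/k)) + O(1))·3/log₂ e, provided δ(n) < 2^{√((1/2) log₂ n)}/(4 log₂ n); consequently binom(n,k)·√(α(k/n)p) < binom(n,k)·p. -/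
private lemma logb_two_le_two_mul {x : ℝ} (hx : 1 ≤ x) : Real.logb 2 x ≤ 2 * x := by
  rw [Real.logb, div_le_iff₀ (Real.log_pos one_lt_two)]
  have h1 := Real.log_le_sub_one_of_pos (show (0:ℝ) < x by linarith)
  have h2 : (0.6931471803 : ℝ) < Real.log 2 := Real.log_two_gt_d9
  nlinarith

set_option maxHeartbeats 1600000 in
/-- Arithmetic core of the all-subgraphs theorem: for any constant `c` (the `O(1)` term)
and all sufficiently large `n`, for every `k ∣ n` with `1 ≤ k ≤ √(2 log₂ n)` and every
deficiency value `0 ≤ d < 2^{√((1/2) log₂ n)}/(4 log₂ n)`, setting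
`p = 2^{-k(k-1)/2}` and
`α = (binom(k,2) + 2 log₂ binom(k,2) + d + log₂(binom(n,k)/(n/k)) + c)·3/log₂ e`,
one has `α < (n/k)·p`, and consequently
`binom(n,k)·√(α(k/n)p) < binom(n,k)·p`. -/
theorem all_subgraphs_arithmetic (c : ℝ) :
    ∃ N : ℕ, ∀ n : ℕ, N ≤ n → ∀ k : ℕ, k ∣ n → 1 ≤ k →
      (k : ℝ) ≤ Real.sqrt (2 * Real.logb 2 n) →
      ∀ d : ℝ, 0 ≤ d →
        d < (2 : ℝ) ^ (Real.sqrt ((1 / 2) * Real.logb 2 n)) / (4 * Real.logb 2 n) →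
        ((k.choose 2 : ℝ) + 2 * Real.logb 2 (k.choose 2) + d +
              Real.logb 2 ((n.choose k : ℝ) / ((n : ℝ) / k)) + c) * 3
            / Real.logb 2 (Real.exp 1)
          < ((n : ℝ) / k) * (2 : ℝ) ^ (-((k : ℝ) * ((k : ℝ) - 1) / 2)) ∧
        (n.choose k : ℝ) *
            Real.sqrt
              ((((k.choose 2 : ℝ) + 2 * Real.logb 2 (k.choose 2) + d +
                    Real.logb 2 ((n.choose k : ℝ) / ((n : ℝ) / k)) + c) * 3
                  / Real.logb 2 (Real.exp 1)) *
                ((k : ℝ) / n) * (2 : ℝ) ^ (-((k : ℝ) * ((k : ℝ) - 1) / 2)))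
          < (n.choose k : ℝ) * (2 : ℝ) ^ (-((k : ℝ) * ((k : ℝ) - 1) / 2)) := by
  refine ⟨⌈(2:ℝ) ^ (2 * 737280^2 + |c| + 9 : ℝ)⌉₊ + 1, ?_⟩
  intro n hn k hdvd hk1 hkL d hd0 hd
  set L := Real.logb 2 n with hLdef
  set s := Real.sqrt (1 / 2 * L) with hsdef
  have hnceil : ⌈(2:ℝ) ^ (2 * 737280^2 + |c| + 9 : ℝ)⌉₊ ≤ n := le_trans (Nat.le_succ _) hn
  have hnR : (2:ℝ) ^ (2 * 737280^2 + |c| + 9 : ℝ) ≤ (n:ℝ) := by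
    exact_mod_cast Nat.ceil_le.mp hnceil
  have hnpos : (0:ℝ) < n := lt_of_lt_of_le (Real.rpow_pos_of_pos two_pos _) hnR
  have hn0 : 0 < n := by exact_mod_cast hnpos
  have hcabs : c ≤ |c| := le_abs_self c
  have habs0 : (0:ℝ) ≤ |c| := abs_nonneg c
  have hLge : 2 * 737280^2 + |c| + 9 ≤ L := by
    rw [hLdef]; exact (Real.le_logb_iff_rpow_le one_lt_two hnpos).mpr hnR
  have hL9 : (9:ℝ) ≤ L := by nlinarith
  have hLc : |c| ≤ L := by nlinarith
  have hLbig : 2 * 737280^2 ≤ L := by nlinarith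
  have hs0 : (0:ℝ) ≤ s := Real.sqrt_nonneg _
  have hs2 : s ^ 2 = 1 / 2 * L := Real.sq_sqrt (by linarith)
  have hs737 : (737280:ℝ) ≤ s := by
    rw [hsdef, show (737280:ℝ) = Real.sqrt (737280^2) from (Real.sqrt_sq (by norm_num)).symm]
    exact Real.sqrt_le_sqrt (by nlinarith)
  have hsqrt2L : Real.sqrt (2 * L) = 2 * s := by
    rw [show 2 * L = (2 * s)^2 by nlinarith]
    exact Real.sqrt_sq (by linarith)
  have hk2s : (k:ℝ) ≤ 2 * s := by rw [← hsqrt2L]; exact hkL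
  have hk0 : (0:ℝ) < k := by exact_mod_cast hk1
  have hkn : k ≤ n := Nat.le_of_dvd hn0 hdvd
  have hknR : (k:ℝ) ≤ n := by exact_mod_cast hkn
  set p := (2:ℝ) ^ (-((k:ℝ) * ((k:ℝ) - 1) / 2)) with hpdef
  have hppos : 0 < p := Real.rpow_pos_of_pos two_pos _
  set Q := (2:ℝ) ^ s with hQdef
  have hQpos : 0 < Q := Real.rpow_pos_of_pos two_pos _
  -- term bounds for α's numerator
  have hchk : (k.choose 2 : ℝ) = (k:ℝ) * ((k:ℝ) - 1) / 2 := Nat.cast_choose_two ℝ k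
  have ht1 : (k.choose 2 : ℝ) ≤ L := by rw [hchk]; nlinarith
  have ht2 : 2 * Real.logb 2 (k.choose 2) ≤ 4 * L := by
    rcases Nat.eq_zero_or_pos (k.choose 2) with h | h
    · rw [h]; simp [Real.logb]; linarith
    · have h1 : (1:ℝ) ≤ (k.choose 2 : ℝ) := by exact_mod_cast h
      have := logb_two_le_two_mul h1
      linarith
  have hCpos : (0:ℝ) < (n.choose k : ℝ) := by exact_mod_cast Nat.choose_pos hkn
  have ht3 : Real.logb 2 ((n.choose k : ℝ) / ((n:ℝ) / k)) ≤ 2 * s * L := by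
    have hquot : (1:ℝ) ≤ (n:ℝ) / k := by rw [le_div_iff₀ hk0]; linarith
    have hCle : (n.choose k : ℝ) ≤ (n:ℝ) ^ k := by exact_mod_cast Nat.choose_le_pow n k
    have harg : (n.choose k : ℝ) / ((n:ℝ) / k) ≤ (n:ℝ) ^ k :=
      le_trans (div_le_self hCpos.le hquot) hCle
    have hargpos : (0:ℝ) < (n.choose k : ℝ) / ((n:ℝ) / k) := by positivity
    calc Real.logb 2 ((n.choose k : ℝ) / ((n:ℝ) / k))
        ≤ Real.logb 2 ((n:ℝ) ^ k) := Real.logb_le_logb_of_le one_lt_two hargpos harg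
      _ = (k:ℝ) * L := by rw [Real.logb_pow]
      _ ≤ 2 * s * L := mul_le_mul_of_nonneg_right hk2s (by linarith)
  -- lower bound for (n/k) * p
  have hn_eq : (2:ℝ) ^ L = n := Real.rpow_logb two_pos (by norm_num) hnpos
  have hE : s ≤ L + -((k:ℝ) * ((k:ℝ) - 1) / 2) := by
    nlinarith [mul_nonneg (sub_nonneg.mpr hk2s) (show (0:ℝ) ≤ 2 * s + k - 1 by linarith)]
  have hQle : Q ≤ (2:ℝ) ^ (L + -((k:ℝ) * ((k:ℝ) - 1) / 2)) :=
    Real.rpow_le_rpow_of_exponent_le one_le_two hE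
  have hRHS : Q / (2 * s) ≤ (n:ℝ) / k * p := by
    have heq : (n:ℝ) / k * p = (2:ℝ) ^ (L + -((k:ℝ) * ((k:ℝ) - 1) / 2)) / k := by
      rw [Real.rpow_add two_pos, hn_eq, hpdef]; ring
    rw [heq]
    exact div_le_div₀ (Real.rpow_pos_of_pos two_pos _).le hQle hk0 hk2s
  -- the deficiency bound, denominators cleared
  have hd8 : d * (8 * s ^ 2) < Q := by
    rw [lt_div_iff₀ (by linarith : (0:ℝ) < 4 * L)] at hd
    calc d * (8 * s ^ 2) = d * (4 * L) := by rw [hs2]; ring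
      _ < Q := hd
  -- exponential lower bound on Q
  have hQs : s ^ 5 ≤ 3840 * Q := by
    have hx0 : (0:ℝ) ≤ Real.log 2 * s := mul_nonneg (Real.log_nonneg one_le_two) hs0
    have h1 := Real.pow_div_factorial_le_exp (x := Real.log 2 * s) hx0 5
    have h2 : Q = Real.exp (Real.log 2 * s) := by
      rw [hQdef, Real.rpow_def_of_pos two_pos]
    have hlog2 : (1/2:ℝ) ≤ Real.log 2 := by
      have := Real.log_two_gt_d9; linarith
    have h3 : (s / 2) ^ 5 ≤ (Real.log 2 * s) ^ 5 :=
      pow_le_pow_left₀ (by positivity) (by nlinarith) 5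
    norm_num [Nat.factorial] at h1
    rw [h2]
    nlinarith [h1, h3]
  -- main inequality
  have hmain : ((k.choose 2 : ℝ) + 2 * Real.logb 2 (k.choose 2) + d +
        Real.logb 2 ((n.choose k : ℝ) / ((n : ℝ) / k)) + c) * 3
        / Real.logb 2 (Real.exp 1) < (n:ℝ) / k * p := by
    have hloge : Real.logb 2 (Real.exp 1) = 1 / Real.log 2 := by
      rw [Real.logb, Real.log_exp]
    rw [hloge, div_div_eq_mul_div, div_one]
    have hlog2pos : 0 < Real.log 2 := Real.log_pos one_lt_two
    have hlog2le : Real.log 2 ≤ 1 := by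
      have := Real.log_le_sub_one_of_pos (show (0:ℝ) < 2 by norm_num); linarith
    have hAB : (k.choose 2 : ℝ) + 2 * Real.logb 2 (k.choose 2) + d +
        Real.logb 2 ((n.choose k : ℝ) / ((n : ℝ) / k)) + c
        ≤ 5 * L + d + 2 * s * L + |c| := by linarith
    have hB0 : (0:ℝ) ≤ 5 * L + d + 2 * s * L + |c| := by nlinarith
    have hα : ((k.choose 2 : ℝ) + 2 * Real.logb 2 (k.choose 2) + d +
        Real.logb 2 ((n.choose k : ℝ) / ((n : ℝ) / k)) + c) * 3 * Real.log 2
        ≤ 3 * (5 * L + d + 2 * s * L + |c|) := by nlinarith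
    refine lt_of_le_of_lt hα (lt_of_lt_of_le ?_ hRHS)
    rw [lt_div_iff₀ (by linarith : (0:ℝ) < 2 * s)]
    have hLs : L = 2 * s ^ 2 := by linarith
    have hsc2 : 6 * s * |c| ≤ 12 * s ^ 3 := by
      have h1 : 6 * s * |c| ≤ 6 * s * L :=
        mul_le_mul_of_nonneg_left hLc (by linarith : (0:ℝ) ≤ 6 * s)
      calc 6 * s * |c| ≤ 6 * s * L := h1
        _ = 12 * s ^ 3 := by rw [hLs]; ring
    have h6s2 : 6 * s * d ≤ 4 * s ^ 2 * d := by
      have h1 : 6 * s ≤ 4 * s ^ 2 := by nlinarith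
      exact mul_le_mul_of_nonneg_right h1 hd0
    have hf1 : 737280 * s ^ 4 ≤ s ^ 5 := by
      calc 737280 * s ^ 4 ≤ s * s ^ 4 :=
            mul_le_mul_of_nonneg_right hs737 (pow_nonneg hs0 4)
        _ = s ^ 5 := by ring
    have hf2 : s ^ 3 ≤ s ^ 4 := by
      calc s ^ 3 = 1 * s ^ 3 := by ring
        _ ≤ s * s ^ 3 := mul_le_mul_of_nonneg_right (by linarith) (pow_nonneg hs0 3)
        _ = s ^ 4 := by ring
    calc 3 * (5 * L + d + 2 * s * L + |c|) * (2 * s)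
        = 60 * s ^ 3 + 24 * s ^ 4 + 6 * s * |c| + 6 * s * d := by rw [hLs]; ring
      _ < Q := by linarith [hsc2, h6s2, hd8, hQs, hf1, hf2]
  refine ⟨hmain, ?_⟩
  have hkden : (0:ℝ) < (k:ℝ) / n * p := by positivity
  refine mul_lt_mul_of_pos_left ?_ hCpos
  rw [Real.sqrt_lt' hppos]
  have hfin : ((n:ℝ) / k * p) * ((k:ℝ) / n * p) = p ^ 2 := by
    field_simp
  calc ((k.choose 2 : ℝ) + 2 * Real.logb 2 (k.choose 2) + d +
        Real.logb 2 ((n.choose k : ℝ) / ((n : ℝ) / k)) + c) * 3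
        / Real.logb 2 (Real.exp 1) * ((k:ℝ) / n) * p
      = (((k.choose 2 : ℝ) + 2 * Real.logb 2 (k.choose 2) + d +
        Real.logb 2 ((n.choose k : ℝ) / ((n : ℝ) / k)) + c) * 3
        / Real.logb 2 (Real.exp 1)) * ((k:ℝ) / n * p) := by ring
    _ < ((n:ℝ) / k * p) * ((k:ℝ) / n * p) := mul_lt_mul_of_pos_right hmain hkden
    _ = p ^ 2 := hfin
end
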